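/- arXiv:1601.02422 — 16 statements merged into one kernel-verified Lean document; each statement's English description precedes it below -/
import Mathlib

section
/- Let P be an integral monoid. Then a P-module (a set M with a P-action) is flat (i.e., a filtered direct limit of free P-modules) if and only if M is torsion-free (p+m = p'+m implies p = p') and comparable (p₁+m₁ = p₂+m₂ implies there exist m ∈ M and ρ₁,ρ₂ ∈ P with ρ₁+m = m₁ and ρ₂+m = m₂). -/
section MonMod

variable (P : Type) [CommMonoid P] (M : Type) [MulAction P M]

/-- `S ⊆ M` is a basis of the `P`-module `M`: the action map `P × S → M` is bijective. -/
def IsBasisSet (S : Set M) : Prop :=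
  Function.Bijective fun x : P × S => x.1 • (x.2 : M)

/-- `M` is a free `P`-module: it admits a basis. -/
def IsFreeMod : Prop := ∃ S : Set M, IsBasisSet P M S

/-- `M` is a torsion-free `P`-module. -/
def IsTorsionFreeMod : Prop := ∀ (p p' : P) (m : M), p • m = p' • m → p = p'

/-- `M` is a comparable `P`-module. -/
def IsComparableMod : Prop :=
  ∀ (p₁ p₂ : P) (m₁ m₂ : M), p₁ • m₁ = p₂ • m₂ →
    ∃ (m : M) (ρ₁ ρ₂ : P), ρ₁ • m = m₁ ∧ ρ₂ • m = m₂

/-- `M` is a flat `P`-module: it is a filtered direct limit of free `P`-modules.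
This is spelled out explicitly: there is a nonempty directed (filtered) index
preorder `(ι, r)`, a functorial system `F` of `P`-modules with free members and
equivariant transition maps `t`, together with equivariant maps `g i : F i → M`
exhibiting `M` as the direct limit of the system. -/
def IsFlatMod : Prop :=
  ∃ (ι : Type) (r : ι → ι → Prop) (F : ι → Type) (act : ∀ i, P → F i → F i)
    (t : ∀ i j, r i j → F i → F j) (g : ∀ i, F i → M),
    Nonempty ι ∧
    (∀ i, r i i) ∧
    (∀ i j k, r i j → r j k → r i k) ∧
    (∀ i j, ∃ k, r i k ∧ r j k) ∧
    -- each `F i` is a `P`-module: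
    (∀ i (x : F i), act i 1 x = x) ∧
    (∀ i (p q : P) (x : F i), act i (p * q) x = act i p (act i q x)) ∧
    -- each `F i` is free:
    (∀ i, ∃ S : Set (F i), Function.Bijective fun x : P × S => act i x.1 (x.2 : F i)) ∧
    -- transition maps are equivariant and functorial:
    (∀ i j (hij : r i j) (p : P) (x : F i), t i j hij (act i p x) = act j p (t i j hij x)) ∧
    (∀ i (hii : r i i) (x : F i), t i i hii x = x) ∧
    (∀ i j k (hij : r i j) (hjk : r j k) (hik : r i k) (x : F i),
       t j k hjk (t i j hij x) = t i k hik x) ∧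
    -- the maps to `M` are equivariant and compatible:
    (∀ i (p : P) (x : F i), g i (act i p x) = p • g i x) ∧
    (∀ i j (hij : r i j) (x : F i), g j (t i j hij x) = g i x) ∧
    -- `M` is the direct limit of the system:
    (∀ m : M, ∃ i, ∃ x : F i, g i x = m) ∧
    (∀ i j (x : F i) (y : F j), g i x = g j y →
       ∃ k, ∃ (hik : r i k) (hjk : r j k), t i k hik x = t j k hjk y)

end MonMod

section Aux2

variable (P : Type) [CommMonoid P] (M : Type) [MulAction P M]

/-- Two elements are related if they lie in a common cyclic submodule. -/
def mrel (m m' : M) : Prop := ∃ (n : M) (ρ ρ' : P), ρ • n = m ∧ ρ' • n = m'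

variable {P M}

theorem mrel_equiv (hC : IsComparableMod P M) : Equivalence (mrel P M) := by
  constructor
  · exact fun m => ⟨m, 1, 1, one_smul _ _, one_smul _ _⟩
  · rintro a b ⟨n, ρ, ρ', h1, h2⟩; exact ⟨n, ρ', ρ, h2, h1⟩
  · rintro a b c ⟨n, ρ, ρ', h1, h2⟩ ⟨n', σ, σ', h3, h4⟩
    obtain ⟨m, τ, τ', ht, ht'⟩ := hC ρ' σ n n' (h2.trans h3.symm)
    exact ⟨m, ρ * τ, σ' * τ', by rw [mul_smul, ht, h1], by rw [mul_smul, ht', h4]⟩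

/-- The setoid of the `mrel` relation (assuming comparability). -/
def msetoid (hC : IsComparableMod P M) : Setoid M := ⟨mrel P M, mrel_equiv hC⟩

theorem mrel_smul (q : P) (m : M) : mrel P M (q • m) m :=
  ⟨m, q, 1, rfl, one_smul _ _⟩

end Aux2

theorem flat_of_tf_comp (P : Type) [CommMonoid P] (M : Type) [MulAction P M]
    (hTF : IsTorsionFreeMod P M) (hC : IsComparableMod P M) : IsFlatMod P M := by
  classical
  -- uniqueness of the acting scalar
  have uniq : ∀ (n : M) (ρ ρ' : P), ρ • n = ρ' • n → ρ = ρ' := fun n ρ ρ' h => hTF ρ ρ' n h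
  set s : Setoid M := msetoid hC with hs
  -- the set of components
  set C : Type := Quotient s with hCdef
  -- the index type: sections choosing a representative in each component
  set ι : Type := {f : C → M // ∀ c, Quotient.mk s (f c) = c} with hι
  set rr : ι → ι → Prop := fun f g => ∀ c, ∃ ρ : P, ρ • g.1 c = f.1 c with hrr
  -- class of a scalar multiple
  have hcls : ∀ (q : P) (m : M), Quotient.mk s (q • m) = Quotient.mk s m :=
    fun q m => Quotient.sound (mrel_smul q m)
  -- common refinements exist
  have key : ∀ (f g : ι) (c : C), ∃ n : M, Quotient.mk s n = c ∧
      (∃ ρ : P, ρ • n = f.1 c) ∧ (∃ ρ : P, ρ • n = g.1 c) := by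
    intro f g c
    have hmr : mrel P M (f.1 c) (g.1 c) := Quotient.exact ((f.2 c).trans (g.2 c).symm)
    obtain ⟨n, ρ, ρ', h1, h2⟩ := hmr
    refine ⟨n, ?_, ⟨ρ, h1⟩, ⟨ρ', h2⟩⟩
    calc Quotient.mk s n = Quotient.mk s (ρ • n) := (hcls ρ n).symm
      _ = c := by rw [h1]; exact f.2 c
  set upper : ι → ι → ι := fun f g =>
    ⟨fun c => (key f g c).choose, fun c => (key f g c).choose_spec.1⟩ with hupper
  have hupl : ∀ f g : ι, rr f (upper f g) := fun f g c => (key f g c).choose_spec.2.1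
  have hupr : ∀ f g : ι, rr g (upper f g) := fun f g c => (key f g c).choose_spec.2.2
  refine ⟨ι, rr, fun _ => C × P, fun _ p x => (x.1, p * x.2),
    fun f g h x => (x.1, x.2 * (h x.1).choose), fun f x => x.2 • f.1 x.1,
    ⟨⟨fun c => c.out, fun c => c.out_eq⟩⟩,
    fun f c => ⟨1, one_smul _ _⟩,
    ?_, fun f g => ⟨upper f g, hupl f g, hupr f g⟩,
    fun _ x => by simp, fun _ p q x => by simp [mul_assoc],
    ?_, fun _ _ _ p x => by simp [mul_assoc], ?_, ?_,
    fun f p x => mul_smul _ _ _, ?_, ?_, ?_⟩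
  · -- transitivity of rr
    intro f g h hfg hgh c
    exact ⟨(hfg c).choose * (hgh c).choose,
      by rw [mul_smul, (hgh c).choose_spec, (hfg c).choose_spec]⟩
  · -- freeness
    intro f
    refine ⟨{x : C × P | x.2 = 1}, ?_, ?_⟩
    · rintro ⟨p, ⟨⟨c1, q1⟩, hx⟩⟩ ⟨q, ⟨⟨c2, q2⟩, hy⟩⟩ h
      simp only [Set.mem_setOf_eq] at hx hy
      subst hx; subst hy
      simp only [Prod.mk.injEq, mul_one] at h
      obtain ⟨h1, h2⟩ := h
      subst h1; subst h2
      rfl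
    · rintro ⟨c, q⟩
      exact ⟨(q, ⟨(c, 1), rfl⟩), by simp⟩
  · -- identity transitions
    intro f hff x
    have : (hff x.1).choose = 1 := uniq _ _ _ ((hff x.1).choose_spec.trans (one_smul _ _).symm)
    simp [this]
  · -- composition of transitions
    intro i j k hij hjk hik x
    simp only [Prod.mk.injEq, mul_assoc, true_and]
    congr 1
    refine uniq (k.1 x.1) _ _ ?_
    rw [mul_smul, (hjk x.1).choose_spec, (hij x.1).choose_spec, (hik x.1).choose_spec]
  · -- compatibility with g
    intro i j hij x
    show (x.2 * (hij x.1).choose) • j.1 x.1 = x.2 • i.1 x.1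
    rw [mul_smul, (hij x.1).choose_spec]
  · -- surjectivity onto M
    intro m
    refine ⟨⟨fun c => if c = Quotient.mk s m then m else c.out, ?_⟩,
      (Quotient.mk s m, 1), ?_⟩
    · intro c
      by_cases h : c = Quotient.mk s m
      · simp [h]
      · simp [h]
    · simp
  · -- injectivity (limit property)
    intro i j x y hxy
    simp only at hxy
    have hcc : x.1 = y.1 := by
      have h1 : Quotient.mk s (x.2 • i.1 x.1) = x.1 := (hcls x.2 _).trans (i.2 x.1)
      have h2 : Quotient.mk s (y.2 • j.1 y.1) = y.1 := (hcls y.2 _).trans (j.2 y.1)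
      rw [← h1, ← h2, hxy]
    refine ⟨upper i j, hupl i j, hupr i j, ?_⟩
    simp only [Prod.mk.injEq]
    refine ⟨hcc, ?_⟩
    refine uniq ((upper i j).1 y.1) _ _ ?_
    rw [mul_smul, mul_smul, (hupr i j y.1).choose_spec]
    have := (hupl i j x.1).choose_spec
    rw [hcc] at this ⊢
    rw [this]
    rw [hcc] at hxy
    exact hxy

/-- Let `P` be an integral (commutative) monoid. A `P`-module `M` is flat
(i.e. a filtered direct limit of free `P`-modules) iff it is torsion-free and comparable. -/
theorem stmt0 (P : Type) [CommMonoid P] (hP : ∀ a b c : P, a * b = a * c → b = c)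
    (M : Type) [MulAction P M] :
    IsFlatMod P M ↔ IsTorsionFreeMod P M ∧ IsComparableMod P M := by
  constructor
  · rintro ⟨ι, r, F, act, t, g, ⟨i₀⟩, hrefl, htrans, hdir, hone, hmul, hfree, hteq, htid,
      htcmp, hgeq, hgcmp, hsurj, hinj⟩
    constructor
    · -- torsion-free
      intro p p' m hpm
      obtain ⟨i, x, hx⟩ := hsurj m
      have hgg : g i (act i p x) = g i (act i p' x) := by
        rw [hgeq, hgeq, hx, hpm]
      obtain ⟨k, hik, hik', ht⟩ := hinj i i _ _ hgg
      rw [hteq, hteq] at ht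
      have hik'' : hik' = hik := rfl
      rw [hik''] at ht
      obtain ⟨S, hS⟩ := hfree k
      obtain ⟨⟨q, sv⟩, hqs⟩ := hS.2 (t i k hik x)
      simp only at hqs
      rw [← hqs, ← hmul, ← hmul] at ht
      have := hS.1 (a₁ := (p * q, sv)) (a₂ := (p' * q, sv)) ht
      have hpq : p * q = p' * q := (Prod.mk.injEq _ _ _ _ ▸ this).1
      exact hP q p p' (by rwa [mul_comm q p, mul_comm q p'])
    · -- comparable
      intro p₁ p₂ m₁ m₂ h
      obtain ⟨i, x, hx⟩ := hsurj m₁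
      obtain ⟨j, y, hy⟩ := hsurj m₂
      have hgg : g i (act i p₁ x) = g j (act j p₂ y) := by
        rw [hgeq, hgeq, hx, hy, h]
      obtain ⟨k, hik, hjk, ht⟩ := hinj i j _ _ hgg
      rw [hteq, hteq] at ht
      obtain ⟨S, hS⟩ := hfree k
      obtain ⟨⟨q₁, s₁⟩, hq1⟩ := hS.2 (t i k hik x)
      obtain ⟨⟨q₂, s₂⟩, hq2⟩ := hS.2 (t j k hjk y)
      simp only at hq1 hq2
      rw [← hq1, ← hq2, ← hmul, ← hmul] at ht
      have := hS.1 (a₁ := (p₁ * q₁, s₁)) (a₂ := (p₂ * q₂, s₂)) ht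
      have hss : s₁ = s₂ := (Prod.mk.injEq _ _ _ _ ▸ this).2
      refine ⟨g k (s₁ : F k), q₁, q₂, ?_, ?_⟩
      · rw [← hgeq, hq1, hgcmp, hx]
      · rw [hss, ← hgeq, hq2, hgcmp, hy]
  · rintro ⟨hTF, hC⟩
    exact flat_of_tf_comp P M hTF hC
end

section
/- If S is a basis of a P-module M (i.e., the map P × S → M, (p,s) ↦ p+s, is bijective), then the set {[s] : s ∈ S} is a basis of the ℤ[P]-module ℤ[M]. In particular, the functor M ↦ ℤ[M] takes free P-modules to free ℤ[P]-modules. -/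
private lemma prodLEquiv_single {α β : Type*} (a : α) (b : β) (c : ℤ) :
    Finsupp.finsuppProdLEquiv ℤ (Finsupp.single (a, b) c)
      = Finsupp.single a (Finsupp.single b c) := by
  classical
  exact Finsupp.curry_single (a, b) c

/-- If `S` is a basis of a `P`-module `M`, then `{[s] : s ∈ S}` is a basis of
the `ℤ[P]`-module `ℤ[M]` (the free abelian group on `M`, with `[p]·[m] = [p + m]`, realized here
as `(Representation.ofMulAction ℤ P M).asModule`). In particular, `M ↦ ℤ[M]` takes free
`P`-modules to free `ℤ[P]`-modules. -/
theorem stmt3 (P : Type) [CommMonoid P] (M : Type) [MulAction P M]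
    (S : Set M) (hS : IsBasisSet P M S) :
    (∃ b : Module.Basis S (MonoidAlgebra ℤ P) (Representation.ofMulAction ℤ P M).asModule,
        ∀ s : S, (Representation.ofMulAction ℤ P M).asModuleEquiv (b s)
          = MonoidAlgebra.ofCoeff (Finsupp.single (s : M) (1 : ℤ))) ∧
      Module.Free (MonoidAlgebra ℤ P) (Representation.ofMulAction ℤ P M).asModule := by
  classical
  set ρ := Representation.ofMulAction ℤ P M with hρ
  let e : P × S ≃ M := Equiv.ofBijective _ hS
  have he_apply : ∀ x : P × S, e x = x.1 • (x.2 : M) := fun _ => rfl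
  have he : ∀ (p : P) (m : M), e.symm (p • m) = ((p * (e.symm m).1), (e.symm m).2) := by
    intro p m
    apply e.injective
    rw [Equiv.apply_symm_apply, he_apply, mul_smul]
    congr 1
    conv_lhs => rw [← Equiv.apply_symm_apply e m, he_apply]
  have he_s : ∀ s : S, e.symm (s : M) = (1, s) := by
    intro s
    apply e.injective
    rw [Equiv.apply_symm_apply, he_apply, one_smul]
  -- the additive equivalence `ℤ[M] ≃ (S →₀ ℤ[P])`
  let f : MonoidAlgebra ℤ M ≃+ (S →₀ MonoidAlgebra ℤ P) :=
    MonoidAlgebra.coeffAddEquiv.trans (((Finsupp.domCongr (e.symm.trans (Equiv.prodComm P S))).trans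
      (Finsupp.finsuppProdLEquiv ℤ).toAddEquiv).trans
        (Finsupp.mapRange.addEquiv MonoidAlgebra.coeffAddEquiv.symm))
  have hf : ∀ (m : M) (c : ℤ), f (MonoidAlgebra.single m c)
      = Finsupp.single ((e.symm m).2) (MonoidAlgebra.single ((e.symm m).1) c) := by
    intro m c
    show Finsupp.mapRange.addEquiv MonoidAlgebra.coeffAddEquiv.symm (Finsupp.finsuppProdLEquiv ℤ
      (Finsupp.equivMapDomain (e.symm.trans (Equiv.prodComm P S)) (Finsupp.single m c))) = _
    rw [Finsupp.equivMapDomain_single, prodLEquiv_single]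
    exact Finsupp.mapRange_single (hf := rfl)
  -- compatibility with the `ℤ[P]`-action
  have hsmul : ∀ (r : MonoidAlgebra ℤ P) (x : MonoidAlgebra ℤ M),
      f (ρ.asAlgebraHom r x) = r • f x := by
    intro r x
    induction r using MonoidAlgebra.induction_linear with
    | zero => simp
    | add a b ha hb => simp [ha, hb, add_smul]
    | single p c =>
      induction x using MonoidAlgebra.induction_linear with
      | zero => simp
      | add a b ha hb => simp only [map_add, ha, hb, smul_add]
      | single m d =>
        rw [Representation.asAlgebraHom_single]
        simp only [LinearMap.smul_apply]
        rw [hρ, Representation.ofMulAction_single]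
        have hsm : ∀ (r : MonoidAlgebra ℤ P) (s : S) (v : MonoidAlgebra ℤ P),
            r • (Finsupp.single s v : S →₀ MonoidAlgebra ℤ P) = Finsupp.single s (r * v) := by
          intro r s v
          rw [Finsupp.smul_single, smul_eq_mul]
        rw [MonoidAlgebra.smul_single, smul_eq_mul, hf, hf, he, hsm,
          MonoidAlgebra.single_mul_single]
  -- the `ℤ[P]`-linear equivalence
  let F : ρ.asModule ≃ₗ[MonoidAlgebra ℤ P] (S →₀ MonoidAlgebra ℤ P) :=
    { toFun := fun x => f (ρ.asModuleEquiv x)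
      invFun := fun y => ρ.asModuleEquiv.symm (f.symm y)
      left_inv := fun x => by simp
      right_inv := fun y => by simp
      map_add' := fun x y => by simp
      map_smul' := fun r x => by
        simp only [RingHom.id_apply]
        rw [Representation.asModuleEquiv_map_smul]
        exact hsmul r (ρ.asModuleEquiv x) }
  let b : Module.Basis S (MonoidAlgebra ℤ P) ρ.asModule := Module.Basis.ofRepr F
  refine ⟨⟨b, fun s => ?_⟩, Module.Free.of_basis b⟩
  have hb : F (b s) = Finsupp.single s 1 := b.repr_self s
  have : f (ρ.asModuleEquiv (b s)) = Finsupp.single s 1 := hb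
  apply f.injective
  rw [this, MonoidAlgebra.ofCoeff_single, hf, he_s]
  rfl
end

section
/- For a monoid P and a P-module M, the following are equivalent: (1) there exists a finite subset S ⊆ M such that the map P × S → M, (p,s) ↦ p+s, is surjective; (2) ℤ[M] is a finitely generated ℤ[P]-module; (3) there exists a nonzero commutative ring A such that A[M] is a finitely generated A[P]-module. -/
open Representation Finsupp

variable {A : Type} [CommRing A] (P : Type) [CommMonoid P] (M : Type) [MulAction P M]

lemma lemA [Nontrivial A] (h : Module.Finite (MonoidAlgebra A P) (ofMulAction A P M).asModule) :
    ∃ S : Finset M, ∀ m : M, ∃ p : P, ∃ s ∈ S, p • s = m := by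
  classical
  set ρ := ofMulAction A P M with hρ
  set e := ρ.asModuleEquiv with he
  obtain ⟨T, hT⟩ := h.fg_top
  refine ⟨T.biUnion (fun v => (e v).coeff.support), fun m => ?_⟩
  have hm : e.symm (MonoidAlgebra.single m 1) ∈ Submodule.span (MonoidAlgebra A P) (T : Set ρ.asModule) := by
    rw [hT]; trivial
  obtain ⟨f, -, hf⟩ := Submodule.mem_span_finset.1 hm
  have key : (MonoidAlgebra.single m (1:A)) = ∑ v ∈ T, ρ.asAlgebraHom (f v) (e v) := by
    have h2 := congrArg e hf
    rw [map_sum, e.apply_symm_apply] at h2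
    simp only [he, asModuleEquiv_map_smul] at h2
    exact h2.symm
  have h1 : (∑ v ∈ T, ρ.asAlgebraHom (f v) (e v)).coeff m ≠ 0 := by
    rw [← key]; simp
  rw [MonoidAlgebra.coeff_sum, Finset.sum_apply'] at h1
  obtain ⟨v, hv, hv2⟩ := Finset.exists_ne_zero_of_sum_ne_zero h1
  have expand : ρ.asAlgebraHom (f v) (e v) = (f v).coeff.sum fun p a => a • ρ p (e v) := by
    conv_lhs => rw [← MonoidAlgebra.sum_coeff_single (f v)]
    rw [map_finsuppSum]
    simp [Finsupp.sum, asAlgebraHom_single]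
  rw [expand, Finsupp.sum, MonoidAlgebra.coeff_sum, Finset.sum_apply'] at hv2
  obtain ⟨p, hp, hp2⟩ := Finset.exists_ne_zero_of_sum_ne_zero hv2
  have hne : (ρ p (e v)).coeff m ≠ 0 := fun h => hp2 (by simp [h])
  have hmem : m ∈ (Finsupp.mapDomain (p • ·) (e v).coeff).support := by
    rw [Finsupp.mem_support_iff]
    exact hne
  obtain ⟨s, hs, hs2⟩ := Finset.mem_image.1 (Finsupp.mapDomain_support hmem)
  exact ⟨p, s, Finset.mem_biUnion.2 ⟨v, hv, hs⟩, hs2⟩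

lemma lemB (S : Finset M) (hS : ∀ m : M, ∃ p : P, ∃ s ∈ S, p • s = m) :
    Module.Finite (MonoidAlgebra A P) (ofMulAction A P M).asModule := by
  classical
  set ρ := ofMulAction A P M with hρ
  set e := ρ.asModuleEquiv with he
  refine ⟨⟨S.image (fun s => e.symm (MonoidAlgebra.single s (1:A))), ?_⟩⟩
  rw [eq_top_iff]
  rintro x -
  have hx : x = e.symm (e x) := rfl
  rw [hx]
  induction (e x) using MonoidAlgebra.induction with
  | zero => simp
  | single_add m a g _ _ ih =>
      rw [map_add]
      refine Submodule.add_mem _ ?_ ih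
      obtain ⟨p, s, hs, hps⟩ := hS m
      have key : e.symm (MonoidAlgebra.single m a)
          = (MonoidAlgebra.single p a : MonoidAlgebra A P) • e.symm (MonoidAlgebra.single s (1:A)) := by
        apply e.injective
        rw [he, asModuleEquiv_map_smul, asAlgebraHom_single]
        show MonoidAlgebra.single m a = a • (ρ p) (MonoidAlgebra.single s 1)
        rw [hρ, ofMulAction_single, hps, MonoidAlgebra.smul_single, smul_eq_mul, mul_one]
      rw [key]
      exact Submodule.smul_mem _ _ (Submodule.subset_span (Finset.mem_coe.2 (Finset.mem_image_of_mem _ hs)))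

/-- For a monoid `P` and a `P`-module `M`, the following are equivalent:
(1) there is a finite subset `S ⊆ M` such that `(p, s) ↦ p • s` is surjective onto `M`;
(2) `ℤ[M]` is a finitely generated `ℤ[P]`-module;
(3) there is a nonzero commutative ring `A` such that `A[M]` is a finitely generated
`A[P]`-module.  Here `A[M]` is realized as `(Representation.ofMulAction A P M).asModule`. -/
theorem stmt4 (P : Type) [CommMonoid P] (M : Type) [MulAction P M] :
    List.TFAE [
      ∃ S : Finset M, ∀ m : M, ∃ p : P, ∃ s ∈ S, p • s = m,
      Module.Finite (MonoidAlgebra ℤ P) (Representation.ofMulAction ℤ P M).asModule,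
      ∃ (A : Type) (_ : CommRing A), Nontrivial A ∧
        Module.Finite (MonoidAlgebra A P) (Representation.ofMulAction A P M).asModule] := by
  tfae_have 1 → 2 := fun ⟨S, hS⟩ => lemB P M S hS
  tfae_have 2 → 3 := fun h => ⟨ℤ, inferInstance, inferInstance, h⟩
  tfae_have 3 → 1 := fun ⟨A, _, _, h⟩ => lemA P M h
  tfae_finish
end

section
/- If P is a finitely generated monoid, M is a finitely generated P-module, and N is a P-submodule of M, then N is a finitely generated P-module. -/
/-- Dickson's lemma in "finite dominating subset" form. -/
lemma dickson_finset {σ : Type} [Finite σ] (S : Set (σ →₀ ℕ)) :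
    ∃ F : Finset (σ →₀ ℕ), ↑F ⊆ S ∧ ∀ s ∈ S, ∃ f ∈ F, f ≤ s := by
  classical
  set Min : Set (σ →₀ ℕ) := {x | x ∈ S ∧ ∀ y ∈ S, y ≤ x → x ≤ y} with hMin
  have hMinS : Min ⊆ S := fun x hx => hx.1
  have hanti : IsAntichain (· ≤ ·) Min := by
    intro a ha b hb hab hle
    exact hab (le_antisymm hle (hb.2 a ha.1 hle))
  have hfin : Min.Finite :=
    hanti.finite_of_partiallyWellOrderedOn ((Set.isPWO_of_wellQuasiOrderedLE S).mono hMinS)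
  refine ⟨hfin.toFinset, by simpa using hMinS, ?_⟩
  intro s hs
  have hwf : S.WellFoundedOn (· < ·) := (Set.isPWO_of_wellQuasiOrderedLE S).isWF
  have key : ∀ x ∈ S, ∃ m ∈ Min, m ≤ x := by
    intro x hx
    refine Set.WellFoundedOn.induction (P := fun z => ∃ m ∈ Min, m ≤ z) hwf hx ?_
    intro y hy ih
    · by_cases hmin : ∀ z ∈ S, z ≤ y → y ≤ z
      · exact ⟨y, ⟨hy, hmin⟩, le_refl y⟩
      · push_neg at hmin
        obtain ⟨z, hz, hzy, hyz⟩ := hmin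
        obtain ⟨m, hm, hmz⟩ := ih z hz (lt_of_le_of_ne hzy (fun h => hyz (h ▸ le_refl z)))
        exact ⟨m, hm, hmz.trans hzy⟩
  obtain ⟨m, hm, hms⟩ := key s hs
  exact ⟨m, hfin.mem_toFinset.2 hm, hms⟩

/-- If `P` is a finitely generated monoid, `M` is a finitely generated
`P`-module and `N` is a `P`-submodule of `M`, then `N` is a finitely generated `P`-module. -/
theorem stmt5 (P : Type) [CommMonoid P] (hP : Monoid.FG P)
    (M : Type) [MulAction P M]
    (hM : ∃ S : Finset M, ∀ m : M, ∃ p : P, ∃ s ∈ S, p • s = m)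
    (N : Set M) (hN : ∀ (p : P), ∀ n ∈ N, p • n ∈ N) :
    ∃ T : Finset M, ↑T ⊆ N ∧ ∀ n ∈ N, ∃ p : P, ∃ t ∈ T, p • t = n := by
  classical
  obtain ⟨G, hG⟩ := hP.fg_top
  set σ := {x : P // x ∈ G}
  set φ : (σ →₀ ℕ) → P := fun f => ∏ i : σ, (i : P) ^ f i with hφ
  have φ_add : ∀ a b, φ (a + b) = φ a * φ b := by
    intro a b
    simp [hφ, Finsupp.add_apply, pow_add, Finset.prod_mul_distrib]
  have φ_surj : ∀ p : P, ∃ f, φ f = p := by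
    intro p
    have hp : p ∈ Submonoid.closure (↑G : Set P) := hG ▸ Submonoid.mem_top p
    induction hp using Submonoid.closure_induction with
    | mem x hx =>
      refine ⟨Finsupp.single ⟨x, hx⟩ 1, ?_⟩
      show (∏ i : σ, (i : P) ^ (Finsupp.single (⟨x, hx⟩ : σ) 1) i) = x
      rw [Fintype.prod_eq_single (⟨x, hx⟩ : σ)]
      · simp
      · intro i hi
        rw [Finsupp.single_apply, if_neg (by simpa using (Ne.symm hi)), pow_zero]
    | one => exact ⟨0, by simp [hφ]⟩
    | mul x y _ _ hx hy =>
      obtain ⟨a, ha⟩ := hx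
      obtain ⟨b, hb⟩ := hy
      exact ⟨a + b, by rw [φ_add, ha, hb]⟩
  obtain ⟨S, hS⟩ := hM
  -- for each s, the "ideal" of exponents sending s into N
  set I : M → Set (σ →₀ ℕ) := fun s => {f | φ f • s ∈ N} with hI
  choose F hFsub hFdom using fun s => dickson_finset (I s)
  refine ⟨S.biUnion (fun s => (F s).image (fun f => φ f • s)), ?_, ?_⟩
  · intro t ht
    simp only [Finset.coe_biUnion, Set.mem_iUnion, Finset.mem_coe, Finset.mem_image] at ht
    obtain ⟨s, _, f, hf, rfl⟩ := ht
    exact hFsub s hf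
  · intro n hn
    obtain ⟨p, s, hsS, hps⟩ := hS n
    obtain ⟨f, rfl⟩ := φ_surj p
    have hfI : f ∈ I s := by rw [hI]; simp only [Set.mem_setOf_eq]; rw [hps]; exact hn
    obtain ⟨g, hgF, hgf⟩ := hFdom s f hfI
    refine ⟨φ (f - g), φ g • s, ?_, ?_⟩
    · exact Finset.mem_biUnion.2 ⟨s, hsS, Finset.mem_image.2 ⟨g, hgF, rfl⟩⟩
    · rw [← mul_smul, ← φ_add, tsub_add_cancel_of_le hgf, hps]
end

section
/- Let P be a fine (finitely generated and integral) monoid and M a finitely generated flat P-module. Then M is free with a finite basis. -/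
/-- **monoidal Quillen–Suslin.** Let `P` be a fine (finitely generated and
integral) monoid and `M` a finitely generated flat `P`-module. Then `M` is a free `P`-module
with a finite basis. -/
theorem stmt6 (P : Type) [CommMonoid P] (hfg : Monoid.FG P)
    (hint : ∀ a b c : P, a * b = a * c → b = c)
    (M : Type) [MulAction P M]
    (hMfg : ∃ S : Finset M, ∀ m : M, ∃ p : P, ∃ s ∈ S, p • s = m)
    (hflat : IsFlatMod P M) :
    ∃ S : Set M, S.Finite ∧ IsBasisSet P M S := by
  classical
  obtain ⟨ι, r, F, act, t, g, hne, hr, htr, hdir, h1, hmul, hfree, hteq, htid, htcomp,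
    hgeq, hgt, hex, hrel⟩ := hflat
  -- cancellation in free modules
  have cancel : ∀ i (p q : P) (y : F i), act i p y = act i q y → p = q := by
    intro i p q y h
    obtain ⟨Si, hSi⟩ := hfree i
    obtain ⟨⟨r0, s⟩, hrs⟩ := hSi.2 y
    simp only at hrs
    have h1' : act i (p * r0) (s : F i) = act i (q * r0) (s : F i) := by
      rw [hmul, hmul, hrs, h]
    have heq := hSi.1 (a₁ := (⟨p * r0, s⟩ : P × Si)) (a₂ := ⟨q * r0, s⟩) h1'
    have hpq : p * r0 = q * r0 := congrArg Prod.fst heq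
    exact hint r0 p q (by rw [mul_comm r0 p, mul_comm r0 q]; exact hpq)
  -- comparability in free modules
  have comp : ∀ i (p₁ p₂ : P) (y₁ y₂ : F i), act i p₁ y₁ = act i p₂ y₂ →
      ∃ z ρ₁ ρ₂, act i ρ₁ z = y₁ ∧ act i ρ₂ z = y₂ := by
    intro i p₁ p₂ y₁ y₂ h
    obtain ⟨Si, hSi⟩ := hfree i
    obtain ⟨⟨q₁, s₁⟩, hs1⟩ := hSi.2 y₁
    obtain ⟨⟨q₂, s₂⟩, hs2⟩ := hSi.2 y₂
    simp only at hs1 hs2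
    have h' : act i (p₁ * q₁) (s₁ : F i) = act i (p₂ * q₂) (s₂ : F i) := by
      rw [hmul, hmul, hs1, hs2, h]
    have heq := hSi.1 (a₁ := (⟨p₁ * q₁, s₁⟩ : P × Si)) (a₂ := ⟨p₂ * q₂, s₂⟩) h'
    have hs : (s₁ : F i) = (s₂ : F i) := by
      have := congrArg Prod.snd heq
      exact congrArg Subtype.val this
    exact ⟨(s₁ : F i), q₁, q₂, hs1, by rw [hs]; exact hs2⟩
  -- M is torsion-free
  have htf : ∀ (p p' : P) (m : M), p • m = p' • m → p = p' := by
    intro p p' m h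
    obtain ⟨i, x, hx⟩ := hex m
    have hgg : g i (act i p x) = g i (act i p' x) := by rw [hgeq, hgeq, hx, h]
    obtain ⟨k, hik, hik', hk⟩ := hrel i i _ _ hgg
    rw [hteq, hteq] at hk
    exact cancel k p p' _ hk
  -- M is comparable
  have hcmp : ∀ (p₁ p₂ : P) (m₁ m₂ : M), p₁ • m₁ = p₂ • m₂ →
      ∃ (m : M) (ρ₁ ρ₂ : P), ρ₁ • m = m₁ ∧ ρ₂ • m = m₂ := by
    intro p₁ p₂ m₁ m₂ h
    obtain ⟨i, x₁, hx₁⟩ := hex m₁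
    obtain ⟨j, x₂, hx₂⟩ := hex m₂
    obtain ⟨k₀, hik, hjk⟩ := hdir i j
    have hg1 : g k₀ (t i k₀ hik x₁) = m₁ := by rw [hgt]; exact hx₁
    have hg2 : g k₀ (t j k₀ hjk x₂) = m₂ := by rw [hgt]; exact hx₂
    have hgg : g k₀ (act k₀ p₁ (t i k₀ hik x₁)) = g k₀ (act k₀ p₂ (t j k₀ hjk x₂)) := by
      rw [hgeq, hgeq, hg1, hg2, h]
    obtain ⟨k, hk1, hk2, hk⟩ := hrel k₀ k₀ _ _ hgg
    rw [hteq, hteq] at hk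
    obtain ⟨z, ρ₁, ρ₂, hz1, hz2⟩ := comp k p₁ p₂ _ _ hk
    refine ⟨g k z, ρ₁, ρ₂, ?_, ?_⟩
    · rw [← hgeq, hz1, hgt]; exact hg1
    · rw [← hgeq, hz2, hgt]; exact hg2
  -- the divisibility-connectedness relation
  set R : M → M → Prop := fun a b => ∃ p q : P, p • a = q • b with hRdef
  have Rsymm : ∀ a b, R a b → R b a := by
    rintro a b ⟨p, q, h⟩; exact ⟨q, p, h.symm⟩
  have Rtrans : ∀ a b c, R a b → R b c → R a c := by
    rintro a b c ⟨p, q, h1'⟩ ⟨p', q', h2'⟩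
    refine ⟨p' * p, q * q', ?_⟩
    calc (p' * p) • a = (p' * q) • b := by rw [mul_smul, h1', mul_smul]
      _ = (q * q') • c := by rw [mul_comm, mul_smul, h2', ← mul_smul]
  obtain ⟨S, hSgen⟩ := hMfg
  -- build a finite set B dominating S, with at most one element per R-class
  have key : ∀ T : Finset M, ∃ B : Finset M,
      (∀ s ∈ T, ∃ b ∈ B, ∃ p : P, p • b = s) ∧
      (∀ b ∈ B, ∀ b' ∈ B, R b b' → b = b') := by
    intro T
    induction T using Finset.induction_on with
    | empty => exact ⟨∅, by simp, by simp⟩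
    | @insert a T' ha ih =>
      obtain ⟨B, hB1, hB2⟩ := ih
      by_cases h : ∃ b ∈ B, R a b
      · obtain ⟨b, hbB, p, q, hpq⟩ := h
        obtain ⟨m, ρ₁, ρ₂, hm1, hm2⟩ := hcmp p q a b hpq
        have hRmb : R m b := ⟨ρ₂, (1 : P), by rw [one_smul]; exact hm2⟩
        refine ⟨insert m (B.erase b), ?_, ?_⟩
        · intro s hs
          rcases Finset.mem_insert.mp hs with rfl | hs'
          · exact ⟨m, Finset.mem_insert_self _ _, ρ₁, hm1⟩
          · obtain ⟨b', hb', p', hp'⟩ := hB1 s hs'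
            by_cases hbb : b' = b
            · subst hbb
              exact ⟨m, Finset.mem_insert_self _ _, p' * ρ₂, by rw [mul_smul, hm2, hp']⟩
            · exact ⟨b', Finset.mem_insert_of_mem (Finset.mem_erase.mpr ⟨hbb, hb'⟩), p', hp'⟩
        · intro x hx y hy hxy
          rcases Finset.mem_insert.mp hx with rfl | hx' <;>
            rcases Finset.mem_insert.mp hy with rfl | hy'
          · rfl
          · exfalso
            have hy2 := Finset.mem_erase.mp hy'
            exact hy2.1 (hB2 y hy2.2 b hbB (Rtrans y x b (Rsymm x y hxy) hRmb))
          · exfalso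
            have hx2 := Finset.mem_erase.mp hx'
            exact hx2.1 (hB2 x hx2.2 b hbB (Rtrans x y b hxy hRmb))
          · exact hB2 x (Finset.mem_of_mem_erase hx') y (Finset.mem_of_mem_erase hy') hxy
      · refine ⟨insert a B, ?_, ?_⟩
        · intro s hs
          rcases Finset.mem_insert.mp hs with rfl | hs'
          · exact ⟨s, Finset.mem_insert_self _ _, (1 : P), one_smul _ _⟩
          · obtain ⟨b', hb', p', hp'⟩ := hB1 s hs'
            exact ⟨b', Finset.mem_insert_of_mem hb', p', hp'⟩
        · intro x hx y hy hxy
          rcases Finset.mem_insert.mp hx with rfl | hx' <;>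
            rcases Finset.mem_insert.mp hy with rfl | hy'
          · rfl
          · exact absurd ⟨y, hy', hxy⟩ h
          · exact absurd ⟨x, hx', Rsymm x y hxy⟩ h
          · exact hB2 x hx' y hy' hxy
  obtain ⟨B, hB1, hB2⟩ := key S
  refine ⟨↑B, B.finite_toSet, ?_⟩
  constructor
  · rintro ⟨p, b, hb⟩ ⟨p', b', hb'⟩ hpp
    simp only at hpp
    have hbb : b = b' := hB2 b hb b' hb' ⟨p, p', hpp⟩
    subst hbb
    have hppeq : p = p' := htf p p' b hpp
    subst hppeq
    rfl
  · intro m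
    obtain ⟨p, s, hsS, hps⟩ := hSgen m
    obtain ⟨b, hbB, q, hq⟩ := hB1 s hsS
    exact ⟨⟨p * q, b, hbB⟩, by simp only; rw [mul_smul, hq, hps]⟩
end

section
/- Let h : Q → P be a strict map of integral monoids (i.e., the induced map Q/Q* → P/P* of sharpenings is an isomorphism). Then the following are equivalent: (1) h is free (P is a free Q-module via h); (2) h is flat (P is a flat Q-module via h); (3) h is injective. -/
/-- The congruence relation on a commutative monoid identifying elements that differ by a unit.
The quotient is the sharpening `P̄ = P/P*`. -/
def unitsCon (P : Type) [CommMonoid P] : Con P where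
  r a b := ∃ u : Pˣ, a * (u : P) = b
  iseqv :=
    { refl := fun a => ⟨1, by simp⟩
      symm := by
        rintro a b ⟨u, rfl⟩
        exact ⟨u⁻¹, by rw [mul_assoc, Units.mul_inv, mul_one]⟩
      trans := by
        rintro a b c ⟨u, rfl⟩ ⟨v, rfl⟩
        exact ⟨u * v, by rw [Units.val_mul, mul_assoc]⟩ }
  mul' := by
    rintro w x y z ⟨u, rfl⟩ ⟨v, rfl⟩
    exact ⟨u * v, by rw [Units.val_mul, mul_mul_mul_comm]⟩

/-- The sharpening `P̄ = P/P*` of a commutative monoid. -/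
abbrev SharpMon (P : Type) [CommMonoid P] : Type := (unitsCon P).Quotient

/-- The monoid homomorphism `Q̄ → P̄` induced on sharpenings by `h : Q →* P`. -/
def sharpHom {Q P : Type} [CommMonoid Q] [CommMonoid P] (h : Q →* P) :
    SharpMon Q →* SharpMon P :=
  Con.lift _ ((unitsCon P).mk'.comp h) (by
    rintro a b ⟨u, rfl⟩
    show ((h a : P) : SharpMon P) = ((h (a * (u : Q)) : P) : SharpMon P)
    refine (Con.eq _).mpr ⟨Units.map (h : Q →* P) u, ?_⟩
    simp [map_mul])

/-- The `Q`-module structure on `P` induced by a monoid homomorphism `h : Q →* P`,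
with action `q • p = h q * p`. -/
def mulActionOfHom {Q P : Type} [Monoid Q] [Monoid P] (h : Q →* P) : MulAction Q P where
  smul q p := h q * p
  one_smul p := show h 1 * p = p by rw [map_one, one_mul]
  mul_smul q q' p := show h (q * q') * p = h q * (h q' * p) by rw [map_mul, mul_assoc]

/-- The setoid on `Pˣ` whose classes are orbits of `Qˣ` acting via `h`. -/
def urel {Q P : Type} [CommMonoid Q] [CommMonoid P] (h : Q →* P) : Setoid Pˣ where
  r u u' := ∃ v : Qˣ, u * Units.map (h : Q →* P) v = u'
  iseqv :=
    { refl := fun u => ⟨1, by simp⟩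
      symm := by
        rintro a b ⟨v, rfl⟩
        exact ⟨v⁻¹, by rw [mul_assoc, ← map_mul]; simp⟩
      trans := by
        rintro a b c ⟨v, rfl⟩ ⟨w, rfl⟩
        exact ⟨v * w, by rw [map_mul, mul_assoc]⟩ }

lemma sharpHom_mk {Q P : Type} [CommMonoid Q] [CommMonoid P] (h : Q →* P) (q : Q) :
    sharpHom h ((q : SharpMon Q)) = ((h q : P) : SharpMon P) := rfl

/-- Let `h : Q → P` be a strict map of integral (commutative) monoids, i.e. the
induced map `Q/Q* → P/P*` of sharpenings is an isomorphism. Then the following are equivalent: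
(1) `h` is free (`P` is a free `Q`-module via `h`); (2) `h` is flat (`P` is a flat
`Q`-module via `h`); (3) `h` is injective. -/
theorem stmt7 (Q P : Type) [CommMonoid Q] [CommMonoid P]
    (hQ : ∀ a b c : Q, a * b = a * c → b = c)
    (hP : ∀ a b c : P, a * b = a * c → b = c)
    (h : Q →* P) (hstrict : Function.Bijective (sharpHom h)) :
    List.TFAE [@IsFreeMod Q _ P (mulActionOfHom h),
      @IsFlatMod Q _ P (mulActionOfHom h),
      Function.Injective h] := by
  tfae_have 3 → 1
  | hinj => by
    classical
    set st := urel h with hst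
    refine ⟨Set.range (fun c : Quotient st => ((Quotient.out c : Pˣ) : P)), ?_, ?_⟩
    · -- injectivity
      rintro ⟨q, s, c, hc⟩ ⟨q', s', c', hc'⟩ heq
      simp only at heq
      subst hc hc'
      -- heq : h q * out c = h q' * out c'
      change h q * _ = h q' * _ at heq
      -- pass to sharpening
      have hsh : sharpHom h ((q : SharpMon Q)) = sharpHom h ((q' : SharpMon Q)) := by
        rw [sharpHom_mk, sharpHom_mk]
        refine (Con.eq _).mpr ⟨Quotient.out c * (Quotient.out c')⁻¹, ?_⟩
        have : (h q * Quotient.out c) * ((Quotient.out c')⁻¹ : Pˣ) =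
            (h q' * Quotient.out c') * ((Quotient.out c')⁻¹ : Pˣ) := by rw [heq]
        simpa [mul_assoc] using this
      obtain ⟨v, hv⟩ := (Con.eq _).mp (hstrict.1 hsh)
      -- hv : q * v = q'
      have hvh : h q * h v = h q' := by rw [← map_mul, hv]
      have hunits : ((Quotient.out c' : Pˣ) : P) * h v = ((Quotient.out c : Pˣ) : P) := by
        apply hP (h q)
        calc h q * (((Quotient.out c' : Pˣ) : P) * h v)
            = h q * h v * ((Quotient.out c' : Pˣ) : P) := by
              rw [mul_comm (((Quotient.out c' : Pˣ) : P)) (h v), ← mul_assoc]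
          _ = h q' * ((Quotient.out c' : Pˣ) : P) := by rw [hvh]
          _ = h q * ((Quotient.out c : Pˣ) : P) := heq.symm
      have hrel : st.r (Quotient.out c') (Quotient.out c) :=
        ⟨v, Units.ext (by simpa using hunits)⟩
      have hcc : c' = c := by
        have := Quotient.sound hrel
        rwa [Quotient.out_eq, Quotient.out_eq] at this
      subst hcc
      have hu1 : ((Quotient.out c' : Pˣ) : P) * h v = ((Quotient.out c' : Pˣ) : P) * 1 := by
        rw [mul_one]; rw [hunits]
      have hv1 : h v = 1 := hP _ _ _ hu1
      have : (v : Q) = 1 := hinj (by rw [hv1, map_one])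
      have hq : q = q' := by rw [← hv, this, mul_one]
      subst hq
      rfl
    · -- surjectivity
      intro p
      obtain ⟨x, hx⟩ := hstrict.2 ((p : SharpMon P))
      obtain ⟨q, rfl⟩ := Quotient.exists_rep x
      have hx' : ((h q : P) : SharpMon P) = (p : SharpMon P) := hx
      obtain ⟨u, hu⟩ := (Con.eq _).mp hx'
      -- hu : h q * u = p
      obtain ⟨v, hv⟩ := Quotient.mk_out (s := st) u
      -- hv : out ⟦u⟧ * map h v = u
      refine ⟨⟨q * v, ⟨_, ⟨Quotient.mk st u, rfl⟩⟩⟩, ?_⟩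
      show h (q * v) * ((Quotient.out (Quotient.mk st u) : Pˣ) : P) = p
      have hv' : ((Quotient.out (Quotient.mk st u) : Pˣ) : P) * h v = (u : P) :=
        congrArg Units.val hv
      rw [map_mul, ← hu, ← hv']
      simp [mul_comm, mul_left_comm, mul_assoc]
  tfae_have 1 → 2
  | hfree => by
    refine ⟨Unit, fun _ _ => True, fun _ => P, fun _ q p => h q * p,
      fun _ _ _ x => x, fun _ x => x, ⟨()⟩, fun _ => trivial, fun _ _ _ _ _ => trivial,
      fun _ _ => ⟨(), trivial, trivial⟩, fun _ x => show h 1 * x = x by simp,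
      fun _ p q x => show h (p * q) * x = h p * (h q * x) by rw [map_mul, mul_assoc],
      fun _ => hfree,
      fun _ _ _ _ _ => rfl, fun _ _ _ => rfl, fun _ _ _ _ _ _ _ => rfl,
      fun _ _ _ => rfl, fun _ _ _ _ => rfl, fun m => ⟨(), m, rfl⟩,
      fun _ _ x y hxy => ⟨(), trivial, trivial, hxy⟩⟩
  tfae_have 2 → 3
  | hflat => by
    obtain ⟨ι, r, F, act, t, g, -, -, -, -, -, hmul, hfree, hequiv, -, -, hgeq, -, hsurj, hlim⟩ :=
      hflat
    intro q q' hqq'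
    obtain ⟨i, x, hx⟩ := hsurj (1 : P)
    have hgx : g i (act i q x) = g i (act i q' x) := by
      rw [hgeq, hgeq]
      show h q * g i x = h q' * g i x
      rw [hqq']
    obtain ⟨k, hik, hjk, htk⟩ := hlim i i (act i q x) (act i q' x) hgx
    have hik' : hik = hjk := rfl
    rw [hik', hequiv, hequiv] at htk
    -- htk : act k q (t i k hjk x) = act k q' (t i k hjk x)
    obtain ⟨S, hS⟩ := hfree k
    obtain ⟨⟨q₀, s⟩, hy⟩ := hS.2 (t i k hjk x)
    rw [← hy, ← hmul, ← hmul] at htk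
    have := hS.1 (a₁ := (q * q₀, s)) (a₂ := (q' * q₀, s)) htk
    have hqq : q * q₀ = q' * q₀ := congrArg Prod.fst this
    exact hQ q₀ q q' (by rw [mul_comm q₀ q, mul_comm q₀ q', hqq])
  tfae_finish
end

section
/- Let P be an integral monoid. A P-module M is flat if and only if M is flat as a P*-module and the quotient module M̄ = M ⊗_P P̄ is a flat P̄-module, where P* is the group of units and P̄ = P/P* is the sharpening. -/
/-- The setoid on a `P`-module `M` identifying elements in the same `P*`-orbit.
The quotient is the sharpened module `M̄ = M ⊗_P P̄`. -/
def sharpSetoid (P M : Type) [CommMonoid P] [MulAction P M] : Setoid M where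
  r m m' := ∃ u : Pˣ, (u : P) • m = m'
  iseqv :=
    { refl := fun m => ⟨1, by simp⟩
      symm := by
        rintro m m' ⟨u, rfl⟩
        exact ⟨u⁻¹, by rw [smul_smul, Units.inv_mul, one_smul]⟩
      trans := by
        rintro m m' m'' ⟨u, rfl⟩ ⟨v, rfl⟩
        exact ⟨v * u, by rw [Units.val_mul, mul_smul]⟩ }

/-- The sharpened module `M̄ = M ⊗_P P̄`: the quotient of `M` by the relation
`m ∼ m'` iff `u • m = m'` for some unit `u ∈ P*`. -/
def SharpModQ (P M : Type) [CommMonoid P] [MulAction P M] : Type :=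
  Quotient (sharpSetoid P M)

/-- The natural `P̄`-module structure on the sharpened module `M̄`. -/
def sharpModAction (P M : Type) [CommMonoid P] [MulAction P M] :
    MulAction (SharpMon P) (SharpModQ P M) where
  smul p m :=
    Quotient.liftOn₂ p m
      (fun (q : P) (x : M) => (Quotient.mk (sharpSetoid P M) (q • x) : SharpModQ P M))
      (by
        rintro q x q' x' ⟨u, rfl⟩ ⟨v, rfl⟩
        refine Quotient.sound ⟨u * v, ?_⟩
        rw [Units.val_mul, smul_smul, smul_smul,
          mul_comm ((u : P) * (v : P)) q, mul_assoc])
  one_smul m := by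
    refine Quotient.inductionOn m fun x => ?_
    show Quotient.mk (sharpSetoid P M) ((1 : P) • x) = Quotient.mk (sharpSetoid P M) x
    rw [one_smul]
  mul_smul p q m := by
    refine Con.induction_on₂ p q fun a b => ?_
    refine Quotient.inductionOn m fun x => ?_
    show Quotient.mk (sharpSetoid P M) ((a * b) • x)
      = Quotient.mk (sharpSetoid P M) (a • b • x)
    rw [mul_smul]

namespace Stmt8Aux

/-! ### Flat ↔ torsion-free + comparable, over a cancellative commutative monoid -/

section General

variable (P M : Type) [CommMonoid P] [MulAction P M]

/-- Easy direction: flat implies torsion-free and comparable. -/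
theorem flat_imp (hP : ∀ a b c : P, a * b = a * c → b = c) (h : IsFlatMod P M) :
    IsTorsionFreeMod P M ∧ IsComparableMod P M := by
  obtain ⟨ι, r, F, act, t, g, -, -, -, hdir, -, hmulact, hfree, teq, -, -,
    geq, gcomp, gsurj, ginj⟩ := h
  have keyTF : ∀ i (p q : P) (x : F i), act i p x = act i q x → p = q := by
    intro i p q x hx
    obtain ⟨S, hinj, hsurj⟩ := hfree i
    obtain ⟨⟨q₀, s⟩, hs'⟩ := hsurj x
    have hs : act i q₀ (s : F i) = x := hs'
    have h1 : act i (p * q₀) (s : F i) = act i (q * q₀) (s : F i) := by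
      rw [hmulact, hmulact, hs, hx]
    have h2 : ((p * q₀, s) : P × S) = (q * q₀, s) := hinj h1
    have h3 : p * q₀ = q * q₀ := congrArg Prod.fst h2
    exact hP q₀ p q (by rw [mul_comm, h3, mul_comm])
  have keyC : ∀ i (p₁ p₂ : P) (x₁ x₂ : F i), act i p₁ x₁ = act i p₂ x₂ →
      ∃ (y : F i) (ρ₁ ρ₂ : P), act i ρ₁ y = x₁ ∧ act i ρ₂ y = x₂ := by
    intro i p₁ p₂ x₁ x₂ hx
    obtain ⟨S, hinj, hsurj⟩ := hfree i
    obtain ⟨⟨q₁, s₁⟩, hs₁'⟩ := hsurj x₁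
    obtain ⟨⟨q₂, s₂⟩, hs₂'⟩ := hsurj x₂
    have hs₁ : act i q₁ (s₁ : F i) = x₁ := hs₁'
    have hs₂ : act i q₂ (s₂ : F i) = x₂ := hs₂'
    have h1 : act i (p₁ * q₁) (s₁ : F i) = act i (p₂ * q₂) (s₂ : F i) := by
      rw [hmulact, hmulact, hs₁, hs₂, hx]
    have h2 : ((p₁ * q₁, s₁) : P × S) = (p₂ * q₂, s₂) := hinj h1
    have h3 : s₁ = s₂ := congrArg Prod.snd h2
    exact ⟨s₁, q₁, q₂, hs₁, by rw [h3]; exact hs₂⟩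
  constructor
  · intro p q m hm
    obtain ⟨i, x, rfl⟩ := gsurj m
    have h1 : g i (act i p x) = g i (act i q x) := by rw [geq, geq, hm]
    obtain ⟨k, hik, hik', ht⟩ := ginj i i _ _ h1
    rw [teq i k hik p x, teq i k hik' q x] at ht
    exact keyTF k p q (t i k hik x) ht
  · intro p₁ p₂ m₁ m₂ hm
    obtain ⟨i, x₁, rfl⟩ := gsurj m₁
    obtain ⟨j, x₂, rfl⟩ := gsurj m₂
    obtain ⟨k, hik, hjk⟩ := hdir i j
    set y₁ := t i k hik x₁ with hy₁
    set y₂ := t j k hjk x₂ with hy₂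
    have e₁ : g k y₁ = g i x₁ := gcomp i k hik x₁
    have e₂ : g k y₂ = g j x₂ := gcomp j k hjk x₂
    have h1 : g k (act k p₁ y₁) = g k (act k p₂ y₂) := by
      rw [geq, geq, e₁, e₂, hm]
    obtain ⟨l, hkl, hkl', ht⟩ := ginj k k _ _ h1
    rw [teq k l hkl p₁ y₁, teq k l hkl' p₂ y₂] at ht
    obtain ⟨w, ρ₁, ρ₂, hw₁, hw₂⟩ := keyC l p₁ p₂ _ _ ht
    refine ⟨g l w, ρ₁, ρ₂, ?_, ?_⟩
    · rw [← geq, hw₁, gcomp, e₁]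
    · rw [← geq, hw₂, gcomp, e₂]

/-- Divisibility on a module: `m'` generates `m`. -/
def Dvd' (m m' : M) : Prop := ∃ p : P, p • m' = m

/-- Two elements have a common generator. -/
def Rel2 (m m' : M) : Prop := ∃ a : M, Dvd' P M m a ∧ Dvd' P M m' a

variable {P M}

theorem dvd'_refl (m : M) : Dvd' P M m m := ⟨1, one_smul _ _⟩

theorem dvd'_trans {a b c : M} (h1 : Dvd' P M a b) (h2 : Dvd' P M b c) :
    Dvd' P M a c := by
  obtain ⟨p, rfl⟩ := h1; obtain ⟨q, rfl⟩ := h2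
  exact ⟨p * q, mul_smul p q c⟩

theorem rel2_symm {a b : M} (h : Rel2 P M a b) : Rel2 P M b a := by
  obtain ⟨c, h1, h2⟩ := h; exact ⟨c, h2, h1⟩

theorem rel2_of_dvd' {a b : M} (h : Dvd' P M a b) : Rel2 P M a b :=
  ⟨b, h, dvd'_refl b⟩

theorem rel2_trans (hC : IsComparableMod P M) {a b c : M}
    (h1 : Rel2 P M a b) (h2 : Rel2 P M b c) : Rel2 P M a c := by
  obtain ⟨d, ⟨p1, hp1⟩, ⟨p2, hp2⟩⟩ := h1
  obtain ⟨e, ⟨q2, hq2⟩, ⟨q3, hq3⟩⟩ := h2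
  obtain ⟨f, ρ₁, ρ₂, hf1, hf2⟩ := hC p2 q2 d e (hp2.trans hq2.symm)
  exact ⟨f, ⟨p1 * ρ₁, by rw [mul_smul, hf1, hp1]⟩,
    ⟨q3 * ρ₂, by rw [mul_smul, hf2, hq3]⟩⟩

variable (P M)

/-- Antichain: no two distinct elements share a common generator. -/
def Anti (S : Finset M) : Prop := ∀ x ∈ S, ∀ y ∈ S, Rel2 P M x y → x = y

/-- Index type for the directed system: finite antichains. -/
def Idx : Type := {S : Finset M // Anti P M S}

/-- Order on the index type: everything in `S` is generated by something in `T`. -/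
def IRel (S T : Idx P M) : Prop := ∀ s ∈ S.1, ∃ t ∈ T.1, Dvd' P M s t

/-- The free module on the antichain `S`. -/
def FF (S : Idx P M) : Type := P × {x : M // x ∈ S.1}

def actF (S : Idx P M) (p : P) (x : FF P M S) : FF P M S := (p * x.1, x.2)

def gF (S : Idx P M) (x : FF P M S) : M := x.1 • (x.2 : M)

theorem gF_act (S : Idx P M) (p : P) (x : FF P M S) :
    gF P M S (actF P M S p x) = p • gF P M S x := mul_smul p x.1 _

variable {P M}

/-- In a free module on an antichain, elements are determined by their image in `M`. -/
theorem uniqF (hTF : IsTorsionFreeMod P M) (hC : IsComparableMod P M) (T : Idx P M)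
    (x y : FF P M T) (h : gF P M T x = gF P M T y) : x = y := by
  obtain ⟨w, ρ₁, ρ₂, hw1, hw2⟩ := hC x.1 y.1 x.2 y.2 h
  have hxy : Rel2 P M (x.2 : M) (y.2 : M) := ⟨w, ⟨ρ₁, hw1⟩, ⟨ρ₂, hw2⟩⟩
  have h2 : (x.2 : M) = y.2 := T.2 _ x.2.2 _ y.2.2 hxy
  have h3 : x.1 • (x.2 : M) = y.1 • (x.2 : M) := by
    have := h; unfold gF at this; rw [← h2] at this; exact this
  exact Prod.ext (hTF x.1 y.1 _ h3) (Subtype.ext h2)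

theorem texists (S T : Idx P M) (h : IRel P M S T) (x : FF P M S) :
    ∃ y : FF P M T, gF P M T y = gF P M S x := by
  obtain ⟨t, ht, p₀, h₀⟩ := h x.2 x.2.2
  exact ⟨(x.1 * p₀, ⟨t, ht⟩), by
    show (x.1 * p₀) • t = x.1 • (x.2 : M)
    rw [mul_smul, h₀]⟩

variable (P M)

noncomputable def tF (S T : Idx P M) (h : IRel P M S T) (x : FF P M S) : FF P M T :=
  (texists S T h x).choose

theorem tF_spec (S T : Idx P M) (h : IRel P M S T) (x : FF P M S) :
    gF P M T (tF P M S T h x) = gF P M S x :=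
  (texists S T h x).choose_spec

variable {P M}

theorem tF_unique (hTF : IsTorsionFreeMod P M) (hC : IsComparableMod P M)
    (S T : Idx P M) (h : IRel P M S T) (x : FF P M S) (y : FF P M T)
    (hy : gF P M T y = gF P M S x) : tF P M S T h x = y :=
  uniqF hTF hC T _ _ ((tF_spec P M S T h x).trans hy.symm)

/-- Merging finitely many elements into a dominating antichain. -/
theorem merge (hTF : IsTorsionFreeMod P M) (hC : IsComparableMod P M) (A : Finset M) :
    ∃ T : Idx P M, ∀ a ∈ A, ∃ t ∈ T.1, Dvd' P M a t := by
  classical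
  induction A using Finset.induction_on with
  | empty => exact ⟨⟨∅, fun x hx => absurd hx (Finset.notMem_empty x)⟩,
      fun a ha => absurd ha (Finset.notMem_empty a)⟩
  | @insert a A ha ih =>
    obtain ⟨T, hT⟩ := ih
    by_cases hE : ∃ t ∈ T.1, Rel2 P M a t
    · obtain ⟨t, htT, b, hab, htb⟩ := hE
      have claim : ∀ y ∈ T.1.erase t, ¬ Rel2 P M b y := by
        intro y hy hby
        have h1 : Rel2 P M t y := rel2_trans hC (rel2_of_dvd' htb) hby
        have h2 : t = y := T.2 t htT y (Finset.mem_of_mem_erase hy) h1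
        exact (Finset.ne_of_mem_erase hy) h2.symm
      refine ⟨⟨insert b (T.1.erase t), ?_⟩, ?_⟩
      · intro x hx y hy hxy
        rcases Finset.mem_insert.mp hx with rfl | hx' <;>
          rcases Finset.mem_insert.mp hy with rfl | hy'
        · rfl
        · exact absurd hxy (claim y hy')
        · exact absurd (rel2_symm hxy) (claim x hx')
        · exact T.2 x (Finset.mem_of_mem_erase hx') y (Finset.mem_of_mem_erase hy') hxy
      · intro x hx
        rcases Finset.mem_insert.mp hx with rfl | hx'
        · exact ⟨b, Finset.mem_insert_self b _, hab⟩
        · obtain ⟨t', ht', hd⟩ := hT x hx'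
          by_cases het : t' = t
          · exact ⟨b, Finset.mem_insert_self b _, dvd'_trans (het ▸ hd) htb⟩
          · exact ⟨t', Finset.mem_insert_of_mem (Finset.mem_erase.mpr ⟨het, ht'⟩), hd⟩
    · refine ⟨⟨insert a T.1, ?_⟩, ?_⟩
      · intro x hx y hy hxy
        rcases Finset.mem_insert.mp hx with rfl | hx' <;>
          rcases Finset.mem_insert.mp hy with rfl | hy'
        · rfl
        · exact absurd ⟨y, hy', hxy⟩ hE
        · exact absurd ⟨x, hx', rel2_symm hxy⟩ hE
        · exact T.2 x hx' y hy' hxy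
      · intro x hx
        rcases Finset.mem_insert.mp hx with rfl | hx'
        · exact ⟨x, Finset.mem_insert_self x _, dvd'_refl x⟩
        · obtain ⟨t', ht', hd⟩ := hT x hx'
          exact ⟨t', Finset.mem_insert_of_mem ht', hd⟩

theorem idx_directed (hTF : IsTorsionFreeMod P M) (hC : IsComparableMod P M)
    (S S' : Idx P M) : ∃ T : Idx P M, IRel P M S T ∧ IRel P M S' T := by
  classical
  obtain ⟨T, hT⟩ := merge hTF hC (S.1 ∪ S'.1)
  exact ⟨T, fun s hs => hT s (Finset.mem_union_left _ hs),
    fun s hs => hT s (Finset.mem_union_right _ hs)⟩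

/-- Hard direction: torsion-free + comparable implies flat. -/
theorem tfc_flat (hTF : IsTorsionFreeMod P M) (hC : IsComparableMod P M) :
    IsFlatMod P M := by
  classical
  refine ⟨Idx P M, IRel P M, FF P M, actF P M, tF P M, gF P M,
    ⟨⟨∅, fun x hx => absurd hx (Finset.notMem_empty x)⟩⟩,
    fun S s hs => ⟨s, hs, dvd'_refl s⟩,
    fun S T U h1 h2 s hs => ?_, idx_directed hTF hC,
    fun S x => ?_, fun S p q x => ?_, fun S => ?_,
    fun S T h p x => ?_, fun S h x => ?_, fun S T U h1 h2 h3 x => ?_,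
    gF_act P M, tF_spec P M, fun m => ?_, fun S T x y h => ?_⟩
  · obtain ⟨t, ht, hd⟩ := h1 s hs
    obtain ⟨u, hu, hd'⟩ := h2 t ht
    exact ⟨u, hu, dvd'_trans hd hd'⟩
  · exact Prod.ext (one_mul x.1) rfl
  · show ((p * q) * x.1, x.2) = (p * (q * x.1), x.2)
    rw [mul_assoc]
  · -- freeness of FF
    refine ⟨{y : FF P M S | y.1 = 1}, ?_, ?_⟩
    · rintro ⟨p, ⟨y1, y2⟩, hy⟩ ⟨q, ⟨z1, z2⟩, hz⟩ hpq'
      have hpq : actF P M S p (y1, y2) = actF P M S q (z1, z2) := hpq'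
      have h1 : p * y1 = q * z1 := congrArg Prod.fst hpq
      have h2 : y2 = z2 := congrArg Prod.snd hpq
      have hy' : y1 = 1 := hy
      have hz' : z1 = 1 := hz
      rw [hy', hz', mul_one, mul_one] at h1
      subst h1; subst h2
      exact Prod.ext rfl (Subtype.ext (Prod.ext (hy'.trans hz'.symm) rfl))
    · rintro ⟨q, s⟩
      exact ⟨(q, ⟨(1, s), rfl⟩), by show (q * 1, s) = (q, s); rw [mul_one]⟩
  · exact tF_unique hTF hC S T h _ _ (by rw [gF_act, gF_act, tF_spec])
  · exact tF_unique hTF hC S S h x x rfl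
  · exact tF_unique hTF hC T U h2 (tF P M S T h1 x) (tF P M S U h3 x)
      (by rw [tF_spec, tF_spec])
  · exact ⟨⟨{m}, fun x hx y hy _ =>
      (Finset.mem_singleton.mp hx).trans (Finset.mem_singleton.mp hy).symm⟩,
      (1, ⟨m, Finset.mem_singleton_self m⟩), one_smul P m⟩
  · obtain ⟨T, h1, h2⟩ := idx_directed hTF hC S T
    exact ⟨T, h1, h2, by
      apply uniqF hTF hC
      rw [tF_spec, tF_spec, h]⟩

end General

end Stmt8Aux

namespace Stmt8Aux

section Bridge

variable (P M : Type) [CommMonoid P] [MulAction P M]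

theorem tf_units (hTF : IsTorsionFreeMod P M) : IsTorsionFreeMod Pˣ M := by
  intro u v m h
  have h' : (u : P) • m = (v : P) • m := h
  exact Units.ext (hTF _ _ m h')

theorem comp_units : IsComparableMod Pˣ M := by
  intro u₁ u₂ m₁ m₂ h
  refine ⟨m₁, 1, u₂⁻¹ * u₁, one_smul _ _, ?_⟩
  rw [mul_smul, h, inv_smul_smul]

theorem sq_surj (x : SharpModQ P M) : ∃ m : M, Quotient.mk (sharpSetoid P M) m = x :=
  Quotient.inductionOn x fun m => ⟨m, rfl⟩

theorem sm_surj (x : SharpMon P) : ∃ p : P, (p : SharpMon P) = x :=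
  Con.induction_on x fun p => ⟨p, rfl⟩

/-- Abbreviation for the quotient map `M → M̄` with the right type. -/
def mkq (m : M) : SharpModQ P M := Quotient.mk (sharpSetoid P M) m

attribute [local instance] sharpModAction

theorem tf_bar (hTF : IsTorsionFreeMod P M) :
    IsTorsionFreeMod (SharpMon P) (SharpModQ P M) := by
  intro p q m h
  obtain ⟨a, rfl⟩ := sm_surj P p
  obtain ⟨b, rfl⟩ := sm_surj P q
  obtain ⟨x, rfl⟩ := sq_surj P M m
  have h' : Quotient.mk (sharpSetoid P M) (a • x)
      = Quotient.mk (sharpSetoid P M) (b • x) := h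
  obtain ⟨u, hu⟩ := Quotient.exact h'
  have h2 : ((u : P) * a) • x = b • x := by rw [mul_smul]; exact hu
  have hab : (u : P) * a = b := hTF _ _ x h2
  exact (Con.eq _).mpr ⟨u, by rw [mul_comm]; exact hab⟩

theorem comp_bar (hC : IsComparableMod P M) :
    IsComparableMod (SharpMon P) (SharpModQ P M) := by
  intro p₁ p₂ m₁ m₂ h
  obtain ⟨a₁, rfl⟩ := sm_surj P p₁
  obtain ⟨a₂, rfl⟩ := sm_surj P p₂
  obtain ⟨x₁, rfl⟩ := sq_surj P M m₁
  obtain ⟨x₂, rfl⟩ := sq_surj P M m₂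
  have h' : Quotient.mk (sharpSetoid P M) (a₁ • x₁)
      = Quotient.mk (sharpSetoid P M) (a₂ • x₂) := h
  obtain ⟨u, hu⟩ := Quotient.exact h'
  have h2 : ((u : P) * a₁) • x₁ = a₂ • x₂ := by rw [mul_smul]; exact hu
  obtain ⟨m, ρ₁, ρ₂, h1', h2'⟩ := hC _ _ _ _ h2
  refine ⟨Quotient.mk (sharpSetoid P M) m, (ρ₁ : SharpMon P), (ρ₂ : SharpMon P), ?_, ?_⟩
  · show Quotient.mk (sharpSetoid P M) (ρ₁ • m) = Quotient.mk (sharpSetoid P M) x₁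
    rw [h1']
  · show Quotient.mk (sharpSetoid P M) (ρ₂ • m) = Quotient.mk (sharpSetoid P M) x₂
    rw [h2']

theorem tf_back (hTFu : IsTorsionFreeMod Pˣ M)
    (hTFs : IsTorsionFreeMod (SharpMon P) (SharpModQ P M)) :
    IsTorsionFreeMod P M := by
  intro p q m h
  have hbar : (p : SharpMon P) • mkq P M m = (q : SharpMon P) • mkq P M m := by
    show mkq P M (p • m) = mkq P M (q • m)
    rw [h]
  obtain ⟨u, hu⟩ := (Con.eq _).mp (hTFs _ _ _ hbar)
  have h2 : u • (p • m) = (1 : Pˣ) • (p • m) := by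
    show (u : P) • (p • m) = ((1 : Pˣ) : P) • (p • m)
    calc (u : P) • (p • m) = ((u : P) * p) • m := (mul_smul _ _ _).symm
      _ = (p * (u : P)) • m := by rw [mul_comm]
      _ = q • m := by rw [hu]
      _ = p • m := h.symm
      _ = ((1 : Pˣ) : P) • (p • m) := by rw [Units.val_one, one_smul]
  have hu1 : u = 1 := hTFu u 1 (p • m) h2
  rw [hu1, Units.val_one, mul_one] at hu
  exact hu

theorem comp_back (hCs : IsComparableMod (SharpMon P) (SharpModQ P M)) :
    IsComparableMod P M := by
  intro p₁ p₂ m₁ m₂ h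
  have hbar : (p₁ : SharpMon P) • mkq P M m₁ = (p₂ : SharpMon P) • mkq P M m₂ := by
    show mkq P M (p₁ • m₁) = mkq P M (p₂ • m₂)
    rw [h]
  obtain ⟨mb, r1, r2, h1, h2⟩ := hCs _ _ _ _ hbar
  obtain ⟨m, rfl⟩ := sq_surj P M mb
  obtain ⟨ρ₁, rfl⟩ := sm_surj P r1
  obtain ⟨ρ₂, rfl⟩ := sm_surj P r2
  have h1' : Quotient.mk (sharpSetoid P M) (ρ₁ • m) = Quotient.mk (sharpSetoid P M) m₁ := h1
  have h2' : Quotient.mk (sharpSetoid P M) (ρ₂ • m) = Quotient.mk (sharpSetoid P M) m₂ := h2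
  obtain ⟨u₁, hu₁⟩ := Quotient.exact h1'
  obtain ⟨u₂, hu₂⟩ := Quotient.exact h2'
  refine ⟨m, (u₁ : P) * ρ₁, (u₂ : P) * ρ₂, ?_, ?_⟩
  · rw [mul_smul]; exact hu₁
  · rw [mul_smul]; exact hu₂

theorem cancel_sharp (hP : ∀ a b c : P, a * b = a * c → b = c) :
    ∀ a b c : SharpMon P, a * b = a * c → b = c := by
  intro a b c h
  obtain ⟨a, rfl⟩ := sm_surj P a
  obtain ⟨b, rfl⟩ := sm_surj P b
  obtain ⟨c, rfl⟩ := sm_surj P c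
  have h' : ((a * b : P) : SharpMon P) = ((a * c : P) : SharpMon P) := h
  obtain ⟨u, hu⟩ := (Con.eq _).mp h'
  have h2 : a * (b * (u : P)) = a * c := by rw [← mul_assoc]; exact hu
  exact (Con.eq _).mpr ⟨u, hP a _ _ h2⟩

end Bridge

end Stmt8Aux


/-- Let `P` be an integral (commutative) monoid. A `P`-module `M` is flat iff
`M` is flat as a `P*`-module and the sharpened module `M̄ = M ⊗_P P̄` is a flat `P̄`-module. -/
theorem stmt8 (P : Type) [CommMonoid P] (hP : ∀ a b c : P, a * b = a * c → b = c)
    (M : Type) [MulAction P M] :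
    IsFlatMod P M ↔
      IsFlatMod Pˣ M ∧
        @IsFlatMod (SharpMon P) _ (SharpModQ P M) (sharpModAction P M) := by
  letI := sharpModAction P M
  have hPu : ∀ a b c : Pˣ, a * b = a * c → b = c := fun a b c h => mul_left_cancel h
  have hPs := Stmt8Aux.cancel_sharp P hP
  constructor
  · intro h
    obtain ⟨hTF, hC⟩ := Stmt8Aux.flat_imp P M hP h
    exact ⟨Stmt8Aux.tfc_flat (Stmt8Aux.tf_units P M hTF) (Stmt8Aux.comp_units P M),
      Stmt8Aux.tfc_flat (Stmt8Aux.tf_bar P M hTF) (Stmt8Aux.comp_bar P M hC)⟩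
  · rintro ⟨hu, hs⟩
    obtain ⟨hTFu, -⟩ := Stmt8Aux.flat_imp Pˣ M hPu hu
    obtain ⟨hTFs, hCs⟩ := Stmt8Aux.flat_imp (SharpMon P) (SharpModQ P M) hPs hs
    exact Stmt8Aux.tfc_flat (Stmt8Aux.tf_back P M hTFu hTFs) (Stmt8Aux.comp_back P M hCs)
end

section
/- Let h : Q → P be an injective map of integral monoids such that the induced map of sharpenings h̄ : Q̄ → P̄ is flat. Then h is flat (P is a flat Q-module). -/
/-- The action `•` given by `mulActionOfHom` is multiplication by the image. -/
theorem mAH_smul {Q P : Type} [Monoid Q] [Monoid P] (h : Q →* P) (q : Q) (p : P) :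
    @HSMul.hSMul Q P P (@instHSMul Q P (mulActionOfHom h).toSMul) q p = h q * p := rfl

/-- Let `h : Q → P` be an injective map of integral (commutative) monoids such
that the induced map of sharpenings `h̄ : Q̄ → P̄` is flat (i.e. `P̄` is a flat `Q̄`-module via
`h̄`). Then `h` is flat (`P` is a flat `Q`-module via `h`). -/
theorem stmt9 (Q P : Type) [CommMonoid Q] [CommMonoid P]
    (hQ : ∀ a b c : Q, a * b = a * c → b = c)
    (hP : ∀ a b c : P, a * b = a * c → b = c)
    (h : Q →* P) (hinj : Function.Injective h)
    (hbar : @IsFlatMod (SharpMon Q) _ (SharpMon P) (mulActionOfHom (sharpHom h))) :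
    @IsFlatMod Q _ P (mulActionOfHom h) := by
  classical
  obtain ⟨ι, r, Fb, actb, tb, gb, hne, hrefl, htrans, hdir, ha1, ham, hfree,
    hteq, htid, htcomp, hgeqb, hgt, hsurjb, hlim⟩ := hbar
  -- basic coercion facts
  have coe_unit : ∀ (v : Qˣ) (p : P), ((h ↑v * p : P) : SharpMon P) = ↑p := by
    intro v p
    refine (Con.eq _).mpr ⟨(Units.map h v)⁻¹, ?_⟩
    have : ((Units.map h v)⁻¹ : Pˣ) = (Units.map h v⁻¹ : Pˣ) := by
      rw [← map_inv]
    rw [this]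
    show h ↑v * p * h ↑(v⁻¹) = p
    rw [mul_comm (h ↑v) p, mul_assoc, ← map_mul]
    simp
  have hgeq : ∀ i (q : Q) (x : Fb i), gb i (actb i ↑q x) = ↑(h q) * gb i x := by
    intro i q x
    rw [hgeqb i (↑q : SharpMon Q) x, mAH_smul]
    rfl
  refine ⟨ι, r, fun i => {xp : Fb i × P // gb i xp.1 = ↑xp.2},
    fun i q xp => ⟨(actb i ↑q xp.1.1, h q * xp.1.2), by
      rw [hgeq i q xp.1.1, xp.2]; rfl⟩,
    fun i j hij xp => ⟨(tb i j hij xp.1.1, xp.1.2), by rw [hgt i j hij xp.1.1, xp.2]⟩,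
    fun i xp => xp.1.2,
    hne, hrefl, htrans, hdir, ?_, ?_, ?_, ?_, ?_, ?_, ?_, ?_, ?_, ?_⟩
  · -- act 1
    intro i xp
    refine Subtype.ext (Prod.ext ?_ ?_)
    · show actb i ↑(1 : Q) xp.1.1 = xp.1.1
      have : ((1 : Q) : SharpMon Q) = 1 := rfl
      rw [this, ha1]
    · show h 1 * xp.1.2 = xp.1.2
      rw [map_one, one_mul]
  · -- act mul
    intro i q q' xp
    refine Subtype.ext (Prod.ext ?_ ?_)
    · show actb i ↑(q * q') xp.1.1 = actb i ↑q (actb i ↑q' xp.1.1)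
      have : ((q * q' : Q) : SharpMon Q) = ↑q * ↑q' := rfl
      rw [this, ham]
    · show h (q * q') * xp.1.2 = h q * (h q' * xp.1.2)
      rw [map_mul, mul_assoc]
  · -- freeness
    intro i
    obtain ⟨S, hS⟩ := hfree i
    -- setoid: orbits of Qˣ acting on P through h
    set s : Setoid P := ⟨fun p p' => ∃ v : Qˣ, h ↑v * p' = p, by
      constructor
      · exact fun p => ⟨1, by simp⟩
      · rintro p p' ⟨v, rfl⟩
        exact ⟨v⁻¹, by rw [← mul_assoc, ← map_mul]; simp⟩
      · rintro p p' p'' ⟨v, rfl⟩ ⟨w, rfl⟩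
        exact ⟨v * w, by rw [Units.val_mul, map_mul, mul_assoc]⟩⟩ with hs_def
    set rep : P → P := fun p => Quotient.out (Quotient.mk s p) with hrep_def
    have hrep1 : ∀ p, ∃ v : Qˣ, h ↑v * p = rep p := fun p =>
      Quotient.exact (Quotient.out_eq (Quotient.mk s p))
    have hrep2 : ∀ p p', (∃ v : Qˣ, h ↑v * p' = p) → rep p = rep p' := fun p p' hr =>
      congrArg Quotient.out (Quotient.sound hr)
    have hrep_idem : ∀ p, rep (rep p) = rep p := fun p => hrep2 _ _ (hrep1 p)
    refine ⟨{xp | xp.1.1 ∈ S ∧ rep xp.1.2 = xp.1.2}, ?_, ?_⟩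
    · -- injective
      rintro ⟨q, b, hbS, hbrep⟩ ⟨q', b', hbS', hbrep'⟩ heq
      have h1 : actb i ↑q b.1.1 = actb i ↑q' b'.1.1 := congrArg (fun z => z.1.1) heq
      have h2 : h q * b.1.2 = h q' * b'.1.2 := congrArg (fun z => z.1.2) heq
      have h3 := hS.1 (a₁ := ((↑q : SharpMon Q), ⟨b.1.1, hbS⟩))
        (a₂ := ((↑q' : SharpMon Q), ⟨b'.1.1, hbS'⟩)) h1
      have hq : (↑q : SharpMon Q) = ↑q' := congrArg Prod.fst h3
      have hb1 : b.1.1 = b'.1.1 := congrArg (fun z => (z.2 : Fb i)) h3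
      obtain ⟨u, hu⟩ := (Con.eq _).mp hq
      -- q * u = q'
      have h4 : h q * b.1.2 = h q * (h ↑u * b'.1.2) := by
        rw [h2, ← hu, map_mul, mul_assoc]
      have h5 : b.1.2 = h ↑u * b'.1.2 := hP _ _ _ h4
      have hb2 : b.1.2 = b'.1.2 := by
        rw [← hbrep, ← hbrep']
        exact hrep2 _ _ ⟨u, h5.symm⟩
      have hq' : q = q' := by
        apply hinj
        apply hP b.1.2
        rw [mul_comm, mul_comm b.1.2, h2, hb2]
      subst hq'
      have : b = b' := Subtype.ext (Prod.ext hb1 hb2)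
      subst this
      rfl
    · -- surjective
      rintro ⟨⟨x, p⟩, hx⟩
      obtain ⟨⟨qb, s₀, hs₀⟩, hqs⟩ := hS.2 x
      obtain ⟨q₀, rfl⟩ := Con.mk'_surjective qb
      have hqs' : actb i (↑q₀ : SharpMon Q) s₀ = x := hqs
      obtain ⟨p₁, hp₁⟩ := Con.mk'_surjective (gb i s₀)
      have hp₁' : ((p₁ : P) : SharpMon P) = gb i s₀ := hp₁
      have key : ((p : P) : SharpMon P) = ↑(h q₀ * p₁) := by
        rw [← hx, ← hqs', hgeq i q₀ s₀, ← hp₁']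
        rfl
      obtain ⟨u, hu⟩ := (Con.eq _).mp key.symm
      -- h q₀ * p₁ * u = p
      set p₂ : P := p₁ * ↑u with hp₂def
      have hpp₂ : p = h q₀ * p₂ := by rw [hp₂def, ← mul_assoc, hu]
      have hp₂bar : ((p₂ : P) : SharpMon P) = gb i s₀ := by
        rw [← hp₁']
        exact (Con.eq _).mpr ⟨u⁻¹, by simp [hp₂def, mul_assoc]⟩
      obtain ⟨v, hv⟩ := hrep1 p₂
      set p₃ : P := rep p₂ with hp₃def
      have hp₃bar : ((p₃ : P) : SharpMon P) = gb i s₀ := by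
        rw [← hp₂bar, ← hv, coe_unit]
      have hp₂eq : p₂ = h ↑(v⁻¹) * p₃ := by
        rw [← hv, ← mul_assoc, ← map_mul]
        simp
      refine ⟨(q₀ * ↑(v⁻¹ : Qˣ), ⟨⟨(s₀, p₃), hp₃bar.symm⟩, hs₀, hrep_idem p₂⟩), ?_⟩
      refine Subtype.ext (Prod.ext ?_ ?_)
      · show actb i ↑(q₀ * ↑(v⁻¹ : Qˣ)) s₀ = x
        have : ((q₀ * ↑(v⁻¹ : Qˣ) : Q) : SharpMon Q) = ↑q₀ :=
          (Con.eq _).mpr ⟨v, by simp [mul_assoc]⟩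
        rw [this, hqs']
      · show h (q₀ * ↑(v⁻¹ : Qˣ)) * p₃ = p
        rw [map_mul, mul_assoc, ← hp₂eq, ← hpp₂]
  · -- t equivariant
    intro i j hij q xp
    refine Subtype.ext (Prod.ext ?_ rfl)
    exact hteq i j hij (↑q) xp.1.1
  · -- t id
    intro i hii xp
    exact Subtype.ext (Prod.ext (htid i hii xp.1.1) rfl)
  · -- t comp
    intro i j k hij hjk hik xp
    exact Subtype.ext (Prod.ext (htcomp i j k hij hjk hik xp.1.1) rfl)
  · -- g equivariant
    intro i q xp
    rw [mAH_smul]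
  · -- g compatible with t
    intro i j hij xp
    rfl
  · -- surjectivity onto P
    intro m
    obtain ⟨i, x, hx⟩ := hsurjb (↑m : SharpMon P)
    exact ⟨i, ⟨(x, m), hx⟩, rfl⟩
  · -- limit property
    rintro i j ⟨⟨x, p⟩, hx⟩ ⟨⟨y, p'⟩, hy⟩ heq
    have hpp : p = p' := heq
    subst hpp
    have : gb i x = gb j y := by rw [hx, hy]
    obtain ⟨k, hik, hjk, ht⟩ := hlim i j x y this
    exact ⟨k, hik, hjk, Subtype.ext (Prod.ext ht rfl)⟩
end

section
/- For every m ≥ 1, the diagonal map Δ : ℕ → ℕ^m is free with basis S = {s ∈ ℕ^m : s_i = 0 for some i}, and Δ is vertical with cokernel ℤ^{m-1} (i.e., the cokernel monoid ℕ^m/Δ(ℕ) is a group isomorphic to ℤ^{m-1}). -/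
/-- For every `m ≥ 1`, the diagonal map `Δ : ℕ → ℕ^m` is free with basis
`S = {s ∈ ℕ^m : s i = 0 for some i}` (i.e. `(q, s) ↦ Δ(q) + s` is a bijection `ℕ × S → ℕ^m`),
and `Δ` is vertical with cokernel `ℤ^{m-1}`: the cokernel monoid `ℕ^m / Δ(ℕ)` — the quotient of
`ℕ^m` by the congruence generated by `Δ(n) + x ∼ x` — is a group isomorphic to `ℤ^{m-1}`. -/
theorem stmt10 (m : ℕ) (hm : 1 ≤ m) :
    Function.Bijective
      (fun x : ℕ × {s : Fin m → ℕ // ∃ i, s i = 0} =>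
        (fun i => x.1 + (x.2 : Fin m → ℕ) i : Fin m → ℕ)) ∧
    Nonempty
      ((addConGen fun a b : Fin m → ℕ => ∃ n : ℕ, a = fun i => n + b i).Quotient ≃+
        (Fin (m - 1) → ℤ)) := by
  haveI : NeZero m := ⟨by omega⟩
  set z0 : Fin m := ⟨0, by omega⟩ with hz0
  constructor
  · constructor
    · -- injectivity
      rintro ⟨q, s, i0, hi0⟩ ⟨q', s', i1, hi1⟩ h
      simp only [Prod.mk.injEq] at h ⊢
      have h' : ∀ i, q + s i = q' + s' i := fun i => congrFun h i
      have h1 : q + s i0 = q' + s' i0 := h' i0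
      have h2 : q + s i1 = q' + s' i1 := h' i1
      have hq : q = q' := by omega
      subst hq
      refine ⟨rfl, Subtype.ext (funext fun i => show s i = s' i by have h3 : q + s i = q + s' i := h' i; omega)⟩
    · -- surjectivity
      intro y
      have hne : (Finset.univ : Finset (Fin m)).Nonempty := Finset.univ_nonempty
      set q := Finset.univ.inf' hne y with hq
      obtain ⟨i0, _, hq0⟩ := Finset.exists_mem_eq_inf' hne y
      have hle : ∀ i, q ≤ y i := fun i => Finset.inf'_le y (Finset.mem_univ i)
      refine ⟨⟨q, fun i => y i - q, ⟨i0, show y i0 - q = 0 by omega⟩⟩, funext fun i => ?_⟩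
      have := hle i
      show q + (y i - q) = y i
      omega
  · -- cokernel part
    set r := fun a b : Fin m → ℕ => ∃ n : ℕ, a = fun i => n + b i with hr
    have hm' : m - 1 + 1 = m := by omega
    set e : Fin (m - 1) → Fin m := fun j => ⟨j.val + 1, by omega⟩ with he
    -- the homomorphism
    set F : (Fin m → ℕ) →+ (Fin (m - 1) → ℤ) :=
      { toFun := fun a j => (a (e j) : ℤ) - a z0
        map_zero' := by funext j; simp
        map_add' := by intro a b; funext j; simp [Pi.add_apply]; ring } with hF
    have hker : addConGen r ≤ AddCon.ker F := by
      apply AddCon.addConGen_le.mpr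
      rintro a b ⟨n, rfl⟩
      show F _ = F _
      funext j
      simp only [hF, AddMonoidHom.coe_mk, ZeroHom.coe_mk]
      push_cast
      ring
    set L := (addConGen r).lift F hker with hL
    have hLmk : ∀ a, L ((addConGen r).mk' a) = F a := fun a => AddCon.lift_mk' hker a
    have hLcoe : ∀ a : Fin m → ℕ, L (a : (addConGen r).Quotient) = F a :=
      fun a => AddCon.lift_coe hker a
    have hsurj : Function.Surjective L := by
      intro z
      set N : ℕ := Finset.univ.sup (fun j : Fin (m - 1) => (-z j).toNat) with hN
      have hNz : ∀ j, 0 ≤ (N : ℤ) + z j := by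
        intro j
        have : (-z j).toNat ≤ N :=
          Finset.le_sup (f := fun j : Fin (m - 1) => (-z j).toNat) (Finset.mem_univ j)
        omega
      set a : Fin m → ℕ := fun i =>
        if h : i.val = 0 then N else ((N : ℤ) + z ⟨i.val - 1, by omega⟩).toNat with ha
      refine ⟨(addConGen r).mk' a, ?_⟩
      rw [hLmk]
      funext j
      have hez : (e j).val = j.val + 1 := rfl
      have hz0v : z0.val = 0 := rfl
      simp only [hF, AddMonoidHom.coe_mk, ZeroHom.coe_mk]
      have h1 : a (e j) = ((N : ℤ) + z j).toNat := by
        simp only [ha, hez, dif_neg (Nat.succ_ne_zero j.val)]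
        congr 1
      have h2 : a z0 = N := by simp only [ha]; exact dif_pos hz0v
      rw [h1, h2]
      have := hNz j
      omega
    have hinj : Function.Injective L := by
      intro x y
      refine AddCon.induction_on₂ x y ?_
      intro a b hab
      rw [hLcoe, hLcoe] at hab
      have hab' : ∀ j, (a (e j) : ℤ) - a z0 = (b (e j) : ℤ) - b z0 := fun j => congrFun hab j
      have key : (fun i => b z0 + a i) = (fun i => a z0 + b i) := by
        funext i
        rcases Nat.eq_zero_or_pos i.val with h0 | hpos
        · have : i = z0 := Fin.ext h0
          subst this; omega
        · have hlt : i.val - 1 < m - 1 := by omega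
          set j : Fin (m - 1) := ⟨i.val - 1, hlt⟩ with hj
          have : e j = i := Fin.ext (by simp [he, hj]; omega)
          have := hab' j
          rw [‹e j = i›] at this
          omega
      have r1 : (addConGen r) (fun i => b z0 + a i) a :=
        AddConGen.Rel.of _ _ ⟨b z0, rfl⟩
      have r2 : (addConGen r) (fun i => a z0 + b i) b :=
        AddConGen.Rel.of _ _ ⟨a z0, rfl⟩
      rw [key] at r1
      exact (addConGen r).eq.mpr (r1.symm.trans r2)
    exact ⟨AddEquiv.ofBijective L ⟨hinj, hsurj⟩⟩
end

section
/- An abelian group G admits a total ordering compatible with the group structure (a ≤ b and c ≤ d imply a+c ≤ b+d, with equality iff a=b and c=d) if and only if G is torsion-free. -/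
/-- An abelian group `G` admits a total ordering compatible with the group
structure (`a ≤ b` and `c ≤ d` imply `a + c ≤ b + d`, with equality iff `a = b` and `c = d`)
if and only if `G` is torsion-free. -/
theorem stmt11 (G : Type) [AddCommGroup G] :
    (∃ r : G → G → Prop, IsLinearOrder G r ∧
        ∀ a b c d : G, r a b → r c d →
          r (a + c) (b + d) ∧ (a + c = b + d ↔ a = b ∧ c = d)) ↔
      ∀ (n : ℕ) (g : G), 0 < n → n • g = 0 → g = 0 := by
  constructor
  · rintro ⟨r, hlin, hcomp⟩ n g hn hgn
    by_contra hg
    rcases hlin.total 0 g with h0g | hg0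
    · have key : ∀ m : ℕ, 0 < m → m • g ≠ 0 ∧ r 0 (m • g) := by
        intro m hm
        induction m with
        | zero => exact absurd hm (lt_irrefl 0)
        | succ k ih =>
          rcases Nat.eq_zero_or_pos k with hk | hk
          · subst hk
            simpa using ⟨hg, h0g⟩
          · obtain ⟨h2, h1⟩ := ih hk
            obtain ⟨h3, h4⟩ := hcomp 0 (k • g) 0 g h1 h0g
            constructor
            · intro h
              rw [succ_nsmul] at h
              exact hg (h4.mp (by simpa using h.symm)).2.symm
            · simpa [succ_nsmul] using h3
      exact (key n hn).1 hgn
    · have key : ∀ m : ℕ, 0 < m → m • g ≠ 0 ∧ r (m • g) 0 := by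
        intro m hm
        induction m with
        | zero => exact absurd hm (lt_irrefl 0)
        | succ k ih =>
          rcases Nat.eq_zero_or_pos k with hk | hk
          · subst hk
            simpa using ⟨hg, hg0⟩
          · obtain ⟨h2, h1⟩ := ih hk
            obtain ⟨h3, h4⟩ := hcomp (k • g) 0 g 0 h1 hg0
            constructor
            · intro h
              rw [succ_nsmul] at h
              exact hg (h4.mp (by simpa using h)).2
            · simpa [succ_nsmul] using h3
      exact (key n hn).1 hgn
  · intro htf
    -- `G` has no integer torsion
    haveI : NoZeroSMulDivisors ℤ G := by
      refine ⟨fun {c} {x} h => ?_⟩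
      by_cases hc : c = 0
      · exact Or.inl hc
      · refine Or.inr ?_
        refine htf c.natAbs x (Int.natAbs_pos.mpr hc) ?_
        have : (c.natAbs : ℤ) • x = 0 := by
          rcases Int.natAbs_eq c with h' | h'
          · rw [← h', h]
          · rw [← neg_neg ((c.natAbs : ℤ))]
            rw [← h']
            simp [h]
        simpa using this
    -- embed `G` into its localization at nonzero integers
    set S := nonZeroDivisors ℤ with hS
    set V := LocalizedModule S G with hV
    let f : G →ₗ[ℤ] V := LocalizedModule.mkLinearMap S G
    have hf : Function.Injective f := by
      intro a b hab
      have h' : LocalizedModule.mk a (1 : S) = LocalizedModule.mk b (1 : S) := hab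
      obtain ⟨u, hu⟩ := LocalizedModule.mk_eq.mp h'
      simp only [one_smul] at hu
      have hu0 : (u : ℤ) ≠ 0 := nonZeroDivisors.coe_ne_zero u
      have hu' : (u : ℤ) • a = (u : ℤ) • b := hu
      have : (u : ℤ) • (a - b) = 0 := by
        rw [smul_sub, hu', sub_self]
      rcases smul_eq_zero.mp this with h | h
      · exact absurd h hu0
      · exact sub_eq_zero.mp h
    -- `V` is a vector space over `ℚ`
    letI : Module (Localization S) V := inferInstanceAs (Module (Localization S) (LocalizedModule S G))
    let e : ℚ ≃+* Localization S :=
      (FractionRing.algEquiv ℤ ℚ).symm.toRingEquiv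
    letI : Module ℚ V := Module.compHom V e.toRingHom
    -- a basis of `V`, with a well-ordered index
    let b := Module.Basis.ofVectorSpace ℚ V
    set ι := Module.Basis.ofVectorSpaceIndex ℚ V with hι
    letI : LinearOrder ι := IsWellOrder.linearOrder WellOrderingRel
    -- the target linearly ordered group
    let L := Lex (ι →₀ ℚ)
    letI : IsOrderedCancelAddMonoid L := inferInstanceAs (IsOrderedCancelAddMonoid (Lex (ι →₀ ℚ)))
    let F : G → L := fun g => toLex (b.repr (f g))
    have hFadd : ∀ x y : G, F (x + y) = F x + F y := by
      intro x y
      show toLex (b.repr (f (x + y))) = toLex (b.repr (f x)) + toLex (b.repr (f y))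
      rw [map_add, map_add]
      rfl
    have hFinj : Function.Injective F := by
      intro x y hxy
      apply hf
      apply b.repr.injective
      exact toLex.injective hxy
    refine ⟨fun a b => F a ≤ F b, ?_, ?_⟩
    · exact
        { refl := fun a => le_refl _
          trans := fun a b c hab hbc => le_trans hab hbc
          antisymm := fun a b hab hba => hFinj (le_antisymm hab hba)
          total := fun a b => le_total _ _ }
    · intro a c d' d hab hcd
      constructor
      · show F (a + d') ≤ F (c + d)
        rw [hFadd, hFadd]
        exact add_le_add hab hcd
      · constructor
        · intro h
          have h' : F a + F d' = F c + F d := by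
            rw [← hFadd, ← hFadd, h]
          obtain ⟨h1, h2⟩ := (add_eq_add_iff_eq_and_eq hab hcd).mp h'
          exact ⟨hFinj h1, hFinj h2⟩
        · rintro ⟨rfl, rfl⟩
          rfl
end

section
/- Let A be a commutative ring graded by a torsion-free abelian group G, and let I ⊆ A be a homogeneous ideal. Then I is prime if and only if I is semiprime (i.e., for all a,b ∈ A with at least one homogeneous, ab ∈ I implies a ∈ I or b ∈ I). -/
open Function

/-- A torsion-free abelian group embeds additively into a linearly ordered abelian group. -/
lemma aux_embed (G : Type) [AddCommGroup G]
    (hG : ∀ (n : ℕ) (g : G), 0 < n → n • g = 0 → g = 0) :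
    ∃ (H : Type) (_ : AddCommGroup H) (_ : LinearOrder H) (_ : IsOrderedAddMonoid H) (f : G → H),
      Function.Injective f ∧ ∀ x y, f (x + y) = f x + f y := by
  classical
  set S := nonZeroDivisors ℤ with hS
  let V := LocalizedModule S G
  let mk := LocalizedModule.mkLinearMap S G
  have hmk : Function.Injective mk := by
    intro x y hxy
    have h0 : mk (x - y) = 0 := by rw [map_sub, hxy, sub_self]
    obtain ⟨r, hr, hrg⟩ := LocalizedModule.mem_ker_mkLinearMap_iff.mp h0
    have hr0 : r ≠ 0 := nonZeroDivisors.ne_zero hr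
    have : x - y = 0 := by
      rcases lt_or_gt_of_ne hr0 with h | h
      · refine hG (-r).toNat _ (by omega) ?_
        have : ((-r).toNat : ℤ) • (x - y) = 0 := by
          rw [Int.toNat_of_nonneg (by omega), neg_smul, hrg, neg_zero]
        rwa [natCast_zsmul] at this
      · refine hG r.toNat _ (by omega) ?_
        have : (r.toNat : ℤ) • (x - y) = 0 := by
          rw [Int.toNat_of_nonneg (by omega), hrg]
        rwa [natCast_zsmul] at this
    exact sub_eq_zero.mp this
  let K := FractionRing ℤ
  let e : K ≃ₐ[ℤ] ℚ := FractionRing.algEquiv ℤ ℚ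
  letI : Module ℚ V := Module.compHom V (e.symm : ℚ →+* K)
  let b := Module.Basis.ofVectorSpace ℚ V
  let ι := Module.Basis.ofVectorSpaceIndex ℚ V
  letI : LinearOrder ι := linearOrderOfSTO WellOrderingRel
  refine ⟨Lex (ι →₀ ℚ), inferInstance, inferInstance, inferInstance, fun g => toLex (b.repr (mk g)), ?_, ?_⟩
  · intro x y hxy
    apply hmk
    apply b.repr.injective
    exact toLex.injective hxy
  · intro x y
    simp only [map_add]
    rfl

/-- Let `A` be a commutative ring graded by a torsion-free abelian group `G`
and let `I ⊆ A` be a homogeneous ideal. Then `I` is prime (`ab ∈ I` implies `a ∈ I` or `b ∈ I`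
for all `a, b`) if and only if `I` is semiprime (the same conclusion whenever at least one of
`a, b` is homogeneous). -/
theorem stmt12 (G : Type) [AddCommGroup G] [DecidableEq G]
    (hG : ∀ (n : ℕ) (g : G), 0 < n → n • g = 0 → g = 0)
    (A : Type) [CommRing A] (𝒜 : G → AddSubgroup A) [GradedRing 𝒜]
    (I : Ideal A) (hI : Ideal.IsHomogeneous 𝒜 I) :
    (∀ a b : A, a * b ∈ I → a ∈ I ∨ b ∈ I) ↔
      (∀ a b : A, (SetLike.IsHomogeneousElem 𝒜 a ∨ SetLike.IsHomogeneousElem 𝒜 b) →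
        a * b ∈ I → a ∈ I ∨ b ∈ I) := by
  letI gr : GradedRing 𝒜 := inferInstance
  constructor
  · intro h a b _ hab
    exact h a b hab
  · intro h
    by_cases hT : I = ⊤
    · subst hT
      intro a b _
      exact Or.inl trivial
    · obtain ⟨H, iH, iH2, iH3, f, finj, fadd⟩ := aux_embed G hG
      letI := iH
      letI := iH2
      haveI := iH3
      letI lo : LinearOrder G :=
      { le := fun a b => f a ≤ f b
        lt := fun a b => f a < f b
        le_refl := fun a => le_refl _
        le_trans := fun a b c => le_trans
        le_antisymm := fun a b h1 h2 => finj (le_antisymm h1 h2)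
        lt_iff_le_not_ge := fun a b => lt_iff_le_not_ge
        le_total := fun a b => le_total _ _
        toDecidableLE := fun a b => inferInstanceAs (Decidable (f a ≤ f b))
        toDecidableEq := ‹DecidableEq G› }
      have hle : ∀ x y : G, x ≤ y ↔ f x ≤ f y := fun x y => Iff.rfl
      letI locm : IsOrderedCancelAddMonoid G :=
      { add_le_add_left := fun a b hab c => by
          rw [hle] at hab ⊢
          rw [fadd, fadd]
          exact add_le_add_left hab _
        le_of_add_le_add_left := fun a b c hh => by
          rw [hle] at hh ⊢
          rw [fadd, fadd] at hh
          exact le_of_add_le_add_left hh }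
      have hprime : I.IsPrime :=
        @Ideal.IsHomogeneous.isPrime_of_homogeneous_mem_or_mem G (AddSubgroup A) A _ _ lo locm _ _ 𝒜
          gr I hI hT (fun {x y} hx _ hxy => h x y (Or.inl hx) hxy)
      exact fun a b hab => hprime.mem_or_mem hab
end

section
/- Let P be an integral monoid and k a field. Then I ↦ k[I] is a bijection between ideals of P and homogeneous ideals of the P^gp-graded ring k[P], and it restricts to a bijection between prime ideals of P and semiprime homogeneous ideals of k[P]. If moreover P^gp is torsion-free, every semiprime homogeneous ideal of k[P] is prime. -/
/-- An ideal of a (commutative) monoid `P`: a subset closed under the action of `P`. -/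
def IsMonIdeal {P : Type} [CommMonoid P] (I : Set P) : Prop :=
  ∀ (p : P), ∀ i ∈ I, p * i ∈ I

/-- The ideal `k[I]` of the monoid algebra `k[P]` attached to an ideal `I` of `P`. -/
noncomputable def kIdeal (k : Type) [Field k] {P : Type} [CommMonoid P] (I : Set P) :
    Ideal (MonoidAlgebra k P) :=
  Ideal.span ((fun i => MonoidAlgebra.single i (1 : k)) '' I)

/-- An element of `k[P]` is homogeneous for the `P^gp`-grading (recorded via an injective
homomorphism `φ : P → G` to an abelian group) iff its support lies in a single fiber of `φ`. -/
def IsHomogElem {P : Type} [CommMonoid P] {k : Type} [Field k] {G : Type} [CommGroup G]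
    (φ : P →* G) (a : MonoidAlgebra k P) : Prop :=
  ∃ g : G, ∀ p ∈ a.coeff.support, φ p = g

/-- The degree-`g` component of an element of `k[P]` for the grading given by `φ`. -/
noncomputable def homogComponent {P : Type} [CommMonoid P] {k : Type} [Field k] {G : Type}
    [CommGroup G] (φ : P →* G) (g : G) (a : MonoidAlgebra k P) : MonoidAlgebra k P :=
  letI := Classical.decPred fun p : P => φ p = g
  MonoidAlgebra.ofCoeff (Finsupp.filter (fun p => φ p = g) a.coeff)

/-- A homogeneous ideal of `k[P]` (for the grading given by `φ`): an ideal containing all of the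
homogeneous components of each of its elements. -/
def IsHomogIdeal {P : Type} [CommMonoid P] {k : Type} [Field k] {G : Type} [CommGroup G]
    (φ : P →* G) (J : Ideal (MonoidAlgebra k P)) : Prop :=
  ∀ a ∈ J, ∀ g : G, homogComponent φ g a ∈ J

/-- A semiprime (homogeneous) ideal: `ab ∈ J` with `a`, `b` homogeneous implies `a ∈ J` or
`b ∈ J`. -/
def IsSemiprimeIdeal {P : Type} [CommMonoid P] {k : Type} [Field k] {G : Type} [CommGroup G]
    (φ : P →* G) (J : Ideal (MonoidAlgebra k P)) : Prop :=
  ∀ a b : MonoidAlgebra k P, IsHomogElem φ a → IsHomogElem φ b → a * b ∈ J → a ∈ J ∨ b ∈ J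

namespace Stmt13Aux

variable {P : Type} [CommMonoid P] {k : Type} [Field k] {G : Type} [CommGroup G]

theorem mem_kIdeal_iff {I : Set P} (hI : IsMonIdeal I) (a : MonoidAlgebra k P) :
    a ∈ kIdeal k I ↔ ∀ p ∈ a.coeff.support, p ∈ I := by
  classical
  constructor
  · intro ha
    let S : Ideal (MonoidAlgebra k P) :=
      { carrier := {a : MonoidAlgebra k P | ∀ p ∈ a.coeff.support, p ∈ I}
        add_mem' := by
          intro x y hx hy p hp
          rw [MonoidAlgebra.coeff_add] at hp
          rcases Finset.mem_union.mp (Finsupp.support_add hp) with h | h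
          exacts [hx p h, hy p h]
        zero_mem' := by simp
        smul_mem' := by
          intro c x hx p hp
          rw [smul_eq_mul] at hp
          obtain ⟨u, hu, v, hv, rfl⟩ := Finset.mem_mul.mp (MonoidAlgebra.support_coeff_mul_subset c x hp)
          exact hI u v (hx v hv) }
    have hle : kIdeal k I ≤ S := by
      rw [kIdeal, Ideal.span_le]
      rintro x ⟨i, hi, rfl⟩ p hp
      rw [MonoidAlgebra.coeff_single] at hp
      have h2 := Finsupp.support_single_subset hp
      simp only [Finset.mem_singleton] at h2
      subst h2; exact hi
    exact hle ha
  · intro ha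
    have h : a = ∑ p ∈ a.coeff.support, MonoidAlgebra.single p (a.coeff p) := by
      have := MonoidAlgebra.sum_coeff_single a
      rw [Finsupp.sum] at this
      exact this.symm
    rw [h]
    refine Ideal.sum_mem _ fun p hp => ?_
    have h1 : MonoidAlgebra.single p (1 : k) ∈ kIdeal k I :=
      Ideal.subset_span ⟨p, ha p hp, rfl⟩
    have h2 : (MonoidAlgebra.single p (a.coeff p) : MonoidAlgebra k P)
        = MonoidAlgebra.single 1 (a.coeff p) * MonoidAlgebra.single p 1 := by
      rw [MonoidAlgebra.single_mul_single, one_mul, mul_one]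
    rw [h2]
    exact Ideal.mul_mem_left _ _ h1

theorem single_mem_kIdeal {I : Set P} (hI : IsMonIdeal I) {p : P} (hp : p ∈ I) (c : k) :
    MonoidAlgebra.single p c ∈ kIdeal k I := by
  rw [mem_kIdeal_iff hI]
  intro q hq
  rw [MonoidAlgebra.coeff_single] at hq
  have h2 := Finsupp.support_single_subset hq
  simp only [Finset.mem_singleton] at h2
  subst h2; exact hp

theorem mem_of_single_mem {I : Set P} (hI : IsMonIdeal I) {p : P} {c : k} (hc : c ≠ 0)
    (h : MonoidAlgebra.single p c ∈ kIdeal k I) : p ∈ I := by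
  rw [mem_kIdeal_iff hI] at h
  apply h p
  rw [MonoidAlgebra.coeff_single, Finsupp.support_single_ne_zero p hc]
  exact Finset.mem_singleton_self p

theorem homogComponent_apply_eq {φ : P →* G} {g : G} (a : MonoidAlgebra k P) {q : P}
    (h : φ q = g) : (homogComponent φ g a).coeff q = a.coeff q := by
  letI := Classical.decPred fun p : P => φ p = g
  unfold homogComponent
  exact Finsupp.filter_apply_pos _ _ h

theorem homogComponent_apply_ne {φ : P →* G} {g : G} (a : MonoidAlgebra k P) {q : P}
    (h : ¬ φ q = g) : (homogComponent φ g a).coeff q = 0 := by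
  letI := Classical.decPred fun p : P => φ p = g
  unfold homogComponent
  exact Finsupp.filter_apply_neg _ _ h

theorem support_homogComponent_subset (φ : P →* G) (g : G) (a : MonoidAlgebra k P) :
    (homogComponent φ g a).coeff.support ⊆ a.coeff.support := by
  intro q hq
  rw [Finsupp.mem_support_iff] at hq ⊢
  by_cases h : φ q = g
  · rwa [homogComponent_apply_eq a h] at hq
  · exact absurd (homogComponent_apply_ne a h) hq

theorem homogComponent_phi {φ : P →* G} (hφ : Function.Injective φ) (a : MonoidAlgebra k P)
    (p : P) : homogComponent φ (φ p) a = MonoidAlgebra.single p (a.coeff p) := by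
  classical
  ext q
  by_cases h : q = p
  · subst h
    rw [homogComponent_apply_eq a rfl, MonoidAlgebra.single_apply, if_pos rfl]
  · rw [homogComponent_apply_ne a (fun hc => h (hφ hc)), MonoidAlgebra.single_apply,
      if_neg (Ne.symm h)]

theorem isHomogElem_single (φ : P →* G) (p : P) (c : k) :
    IsHomogElem φ (MonoidAlgebra.single p c) := by
  refine ⟨φ p, fun q hq => ?_⟩
  rw [MonoidAlgebra.coeff_single] at hq
  have h2 := Finsupp.support_single_subset hq
  simp only [Finset.mem_singleton] at h2
  subst h2; rfl

theorem eq_zero_or_single {φ : P →* G} (hφ : Function.Injective φ)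
    {a : MonoidAlgebra k P} (h : IsHomogElem φ a) :
    a = 0 ∨ ∃ p c, c ≠ 0 ∧ a = MonoidAlgebra.single p c := by
  classical
  rcases eq_or_ne a 0 with h0 | h0
  · exact Or.inl h0
  right
  obtain ⟨g, hg⟩ := h
  obtain ⟨p, hp⟩ := Finsupp.support_nonempty_iff.mpr
    (fun (h : a.coeff = 0) => h0 (MonoidAlgebra.ext (by rw [h]; rfl)))
  refine ⟨p, a.coeff p, Finsupp.mem_support_iff.mp hp, ?_⟩
  ext q
  by_cases hq : q ∈ a.coeff.support
  · have : q = p := hφ ((hg q hq).trans (hg p hp).symm)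
    subst this
    rw [MonoidAlgebra.single_apply, if_pos rfl]
  · rw [Finsupp.notMem_support_iff.mp hq, MonoidAlgebra.single_apply]
    rw [if_neg]
    intro hc
    exact hq (hc ▸ hp)

theorem uniqueProds_of_torsionFree {G : Type} [CommGroup G]
    (htf : ∀ (n : ℕ) (g : G), 0 < n → g ^ n = 1 → g = 1) : UniqueProds G := by
  classical
  constructor
  intro A B hA hB
  set H : Subgroup G := Subgroup.closure ((A ∪ B : Finset G) : Set G) with hH
  have hmem : ∀ g ∈ A ∪ B, g ∈ H := fun g hg => Subgroup.subset_closure hg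
  haveI : Group.FG H := Group.closure_finset_fg _
  haveI : Module.Finite ℤ (Additive H) := Module.Finite.iff_addGroup_fg.mpr inferInstance
  haveI : NoZeroSMulDivisors ℤ (Additive H) := by
    constructor
    intro c x hcx
    by_contra hne
    push_neg at hne
    obtain ⟨hc, hx⟩ := hne
    set g : H := Additive.toMul x with hg
    have h1 : g ^ c = 1 := by
      have := congrArg Additive.toMul hcx
      rwa [toMul_zsmul] at this
    have h2 : g ^ (c.natAbs : ℤ) = 1 := by
      rcases Int.natAbs_eq c with h | h
      · rw [← h]; exact h1
      · rw [h] at h1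
        rw [zpow_neg] at h1
        exact inv_eq_one.mp h1
    rw [zpow_natCast] at h2
    have h3 : ((g : G)) ^ c.natAbs = 1 := by
      have := congrArg (Subgroup.subtype H) h2
      simpa using this
    have h4 : (g : G) = 1 := htf c.natAbs (g : G) (Int.natAbs_pos.mpr hc) h3
    have h5 : g = 1 := Subtype.ext h4
    exact hx (by rw [hg] at h5; simpa using h5)
  haveI : Module.Free ℤ (Additive H) := Module.free_of_finite_type_torsion_free'
  let b := Module.Free.chooseBasis ℤ (Additive H)
  haveI : UniqueSums (Additive H) :=
    UniqueSums.of_injective_addHom b.repr.toLinearMap.toAddMonoidHom.toAddHom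
      b.repr.injective inferInstance
  haveI hUP : UniqueProds H := (MulEquiv.multiplicativeAdditive H).uniqueProds_iff.mp inferInstance
  let A' : Finset H := A.attach.image fun a => (⟨a.1, hmem a.1 (Finset.mem_union_left _ a.2)⟩ : H)
  let B' : Finset H := B.attach.image fun b => (⟨b.1, hmem b.1 (Finset.mem_union_right _ b.2)⟩ : H)
  have hA'img : A'.image ((↑) : H → G) = A := by
    ext g
    simp only [A', Finset.mem_image, Finset.mem_attach, true_and, Subtype.exists]
    constructor
    · rintro ⟨a, ha, ⟨⟨a1, ha1, heq⟩, rfl⟩⟩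
      obtain rfl : a1 = a := congrArg Subtype.val heq
      exact ha1
    · intro hgA
      exact ⟨g, hmem g (Finset.mem_union_left _ hgA), ⟨g, hgA, rfl⟩, rfl⟩
  have hB'img : B'.image ((↑) : H → G) = B := by
    ext g
    simp only [B', Finset.mem_image, Finset.mem_attach, true_and, Subtype.exists]
    constructor
    · rintro ⟨a, ha, ⟨⟨a1, ha1, heq⟩, rfl⟩⟩
      obtain rfl : a1 = a := congrArg Subtype.val heq
      exact ha1
    · intro hgB
      exact ⟨g, hmem g (Finset.mem_union_right _ hgB), ⟨g, hgB, rfl⟩, rfl⟩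
  have hA' : A'.Nonempty := (Finset.attach_nonempty_iff.mpr hA).image _
  have hB' : B'.Nonempty := (Finset.attach_nonempty_iff.mpr hB).image _
  obtain ⟨a0, ha0, b0, hb0, hu⟩ := hUP.uniqueMul_of_nonempty hA' hB'
  refine ⟨(a0 : G), ?_, (b0 : G), ?_, ?_⟩
  · rw [← hA'img]; exact Finset.mem_image_of_mem _ ha0
  · rw [← hB'img]; exact Finset.mem_image_of_mem _ hb0
  · have h := (UniqueMul.mulHom_image_iff (H.subtype.toMulHom) Subtype.val_injective).mpr hu
    have e1 : A'.image (H.subtype.toMulHom) = A := hA'img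
    have e2 : B'.image (H.subtype.toMulHom) = B := hB'img
    rw [e1, e2] at h
    exact h

end Stmt13Aux

open Stmt13Aux in
/-- Let `P` be an integral monoid, `k` a field, and grade `k[P]` by `P^gp`
(realized as an abelian group `G` together with an injective homomorphism `φ : P → G` whose
image generates `G`). Then `I ↦ k[I]` is a bijection between ideals of `P` and homogeneous
ideals of `k[P]`, restricting to a bijection between prime ideals of `P` and semiprime
homogeneous ideals of `k[P]`. If moreover `P^gp` is torsion-free, every semiprime homogeneous
ideal of `k[P]` is prime. -/
theorem stmt13 (P : Type) [CancelCommMonoid P] (k : Type) [Field k]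
    (G : Type) [CommGroup G] (φ : P →* G) (hφ : Function.Injective φ)
    (hgen : Subgroup.closure (Set.range φ) = ⊤) :
    (∀ I : Set P, IsMonIdeal I → IsHomogIdeal φ (kIdeal k I)) ∧
    (∀ I₁ I₂ : Set P, IsMonIdeal I₁ → IsMonIdeal I₂ → kIdeal k I₁ = kIdeal k I₂ → I₁ = I₂) ∧
    (∀ J : Ideal (MonoidAlgebra k P), IsHomogIdeal φ J →
      ∃ I : Set P, IsMonIdeal I ∧ kIdeal k I = J) ∧
    (∀ I : Set P, IsMonIdeal I →
      ((∀ p q : P, p * q ∈ I → p ∈ I ∨ q ∈ I) ↔ IsSemiprimeIdeal φ (kIdeal k I))) ∧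
    ((∀ (n : ℕ) (g : G), 0 < n → g ^ n = 1 → g = 1) →
      ∀ J : Ideal (MonoidAlgebra k P), IsHomogIdeal φ J → IsSemiprimeIdeal φ J →
        ∀ a b : MonoidAlgebra k P, a * b ∈ J → a ∈ J ∨ b ∈ J) := by
  classical
  have part1 : ∀ I : Set P, IsMonIdeal I → IsHomogIdeal φ (kIdeal k I) := by
    intro I hI a ha g
    rw [mem_kIdeal_iff hI] at ha ⊢
    intro p hp
    exact ha p (support_homogComponent_subset φ g a hp)
  have part2 : ∀ I₁ I₂ : Set P, IsMonIdeal I₁ → IsMonIdeal I₂ →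
      kIdeal k I₁ = kIdeal k I₂ → I₁ = I₂ := by
    intro I₁ I₂ h1 h2 heq
    ext p
    constructor
    · intro hp
      exact mem_of_single_mem h2 (one_ne_zero (α := k)) (heq ▸ single_mem_kIdeal h1 hp 1)
    · intro hp
      exact mem_of_single_mem h1 (one_ne_zero (α := k)) (heq ▸ single_mem_kIdeal h2 hp 1)
  have part3 : ∀ J : Ideal (MonoidAlgebra k P), IsHomogIdeal φ J →
      ∃ I : Set P, IsMonIdeal I ∧ kIdeal k I = J := by
    intro J hJ
    set I : Set P := {p | MonoidAlgebra.single p (1 : k) ∈ J} with hIdef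
    have hI : IsMonIdeal I := by
      intro p i hi
      have h : MonoidAlgebra.single (p * i) (1 : k)
          = MonoidAlgebra.single p 1 * MonoidAlgebra.single i 1 := by
        rw [MonoidAlgebra.single_mul_single, one_mul]
      show MonoidAlgebra.single (p * i) (1 : k) ∈ J
      rw [h]
      exact Ideal.mul_mem_left _ _ hi
    refine ⟨I, hI, le_antisymm ?_ ?_⟩
    · rw [kIdeal, Ideal.span_le]
      rintro x ⟨i, hi, rfl⟩
      exact hi
    · intro a ha
      rw [mem_kIdeal_iff hI]
      intro p hp
      have h1 : homogComponent φ (φ p) a ∈ J := hJ a ha (φ p)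
      rw [homogComponent_phi hφ a p] at h1
      have hap : a.coeff p ≠ 0 := Finsupp.mem_support_iff.mp hp
      have h2 : MonoidAlgebra.single p (1 : k)
          = MonoidAlgebra.single 1 (a.coeff p)⁻¹ * MonoidAlgebra.single p (a.coeff p) := by
        rw [MonoidAlgebra.single_mul_single, one_mul, inv_mul_cancel₀ hap]
      show MonoidAlgebra.single p (1 : k) ∈ J
      rw [h2]
      exact Ideal.mul_mem_left _ _ h1
  have part4 : ∀ I : Set P, IsMonIdeal I →
      ((∀ p q : P, p * q ∈ I → p ∈ I ∨ q ∈ I) ↔ IsSemiprimeIdeal φ (kIdeal k I)) := by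
    intro I hI
    constructor
    · intro hpr a b hA hB hab
      rcases eq_zero_or_single hφ hA with rfl | ⟨p, c, hc, rfl⟩
      · exact Or.inl (Ideal.zero_mem _)
      rcases eq_zero_or_single hφ hB with rfl | ⟨q, d, hd, rfl⟩
      · exact Or.inr (Ideal.zero_mem _)
      rw [MonoidAlgebra.single_mul_single] at hab
      have hpq : p * q ∈ I := mem_of_single_mem hI (mul_ne_zero hc hd) hab
      rcases hpr p q hpq with h | h
      · exact Or.inl (single_mem_kIdeal hI h c)
      · exact Or.inr (single_mem_kIdeal hI h d)
    · intro hsp p q hpq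
      have h : MonoidAlgebra.single p (1 : k) * MonoidAlgebra.single q 1 ∈ kIdeal k I := by
        rw [MonoidAlgebra.single_mul_single, one_mul]
        exact single_mem_kIdeal hI hpq 1
      rcases hsp _ _ (isHomogElem_single φ p 1) (isHomogElem_single φ q 1) h with h' | h'
      · exact Or.inl (mem_of_single_mem hI one_ne_zero h')
      · exact Or.inr (mem_of_single_mem hI one_ne_zero h')
  refine ⟨part1, part2, part3, part4, ?_⟩
  intro htf J hJ hsp a b hab
  obtain ⟨I, hI, rfl⟩ := part3 J hJ
  have hpr : ∀ p q : P, p * q ∈ I → p ∈ I ∨ q ∈ I := (part4 I hI).mpr hsp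
  haveI : UniqueProds P :=
    UniqueProds.of_injective_mulHom φ.toMulHom hφ (uniqueProds_of_torsionFree htf)
  rw [mem_kIdeal_iff hI] at hab
  by_cases hA : ∀ p ∈ a.coeff.support, p ∈ I
  · exact Or.inl ((mem_kIdeal_iff hI a).mpr hA)
  by_cases hB : ∀ p ∈ b.coeff.support, p ∈ I
  · exact Or.inr ((mem_kIdeal_iff hI b).mpr hB)
  exfalso
  push_neg at hA hB
  obtain ⟨p₀, hp₀s, hp₀⟩ := hA
  obtain ⟨q₀, hq₀s, hq₀⟩ := hB
  set a' : MonoidAlgebra k P := MonoidAlgebra.ofCoeff (a.coeff.filter (fun p => ¬ p ∈ I)) with ha'def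
  set a'' : MonoidAlgebra k P := MonoidAlgebra.ofCoeff (a.coeff.filter (fun p => p ∈ I)) with ha''def
  set b' : MonoidAlgebra k P := MonoidAlgebra.ofCoeff (b.coeff.filter (fun p => ¬ p ∈ I)) with hb'def
  set b'' : MonoidAlgebra k P := MonoidAlgebra.ofCoeff (b.coeff.filter (fun p => p ∈ I)) with hb''def
  have haa : a'' + a' = a := MonoidAlgebra.ext (Finsupp.filter_pos_add_filter_neg a.coeff _)
  have hbb : b'' + b' = b := MonoidAlgebra.ext (Finsupp.filter_pos_add_filter_neg b.coeff _)
  have ha'ne : a' ≠ 0 := by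
    intro h
    have h1 : a'.coeff p₀ = a.coeff p₀ := Finsupp.filter_apply_pos _ _ hp₀
    rw [h] at h1
    exact (Finsupp.mem_support_iff.mp hp₀s) (by simpa using h1.symm)
  have hb'ne : b' ≠ 0 := by
    intro h
    have h1 : b'.coeff q₀ = b.coeff q₀ := Finsupp.filter_apply_pos _ _ hq₀
    rw [h] at h1
    exact (Finsupp.mem_support_iff.mp hq₀s) (by simpa using h1.symm)
  have hmulne : a' * b' ≠ 0 := mul_ne_zero ha'ne hb'ne
  obtain ⟨r, hr⟩ := Finsupp.support_nonempty_iff.mpr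
    (fun (h : (a' * b').coeff = 0) => hmulne (MonoidAlgebra.ext (by rw [h]; rfl)))
  have hrI : r ∉ I := by
    obtain ⟨u, hu, v, hv, rfl⟩ := Finset.mem_mul.mp (MonoidAlgebra.support_coeff_mul_subset a' b' hr)
    have hu' : u ∉ I := by
      rw [ha'def, MonoidAlgebra.coeff_ofCoeff, Finsupp.support_filter] at hu
      exact (Finset.mem_filter.mp hu).2
    have hv' : v ∉ I := by
      rw [hb'def, MonoidAlgebra.coeff_ofCoeff, Finsupp.support_filter] at hv
      exact (Finset.mem_filter.mp hv).2
    intro huv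
    rcases hpr u v huv with h | h
    exacts [hu' h, hv' h]
  have key : ∀ x y : MonoidAlgebra k P, (∀ p ∈ x.coeff.support, p ∈ I) → (x * y).coeff r = 0 := by
    intro x y hx
    by_contra h
    have hr2 : r ∈ (x * y).coeff.support := Finsupp.mem_support_iff.mpr h
    obtain ⟨u, hu, v, hv, huv⟩ := Finset.mem_mul.mp (MonoidAlgebra.support_coeff_mul_subset x y hr2)
    have : v * u ∈ I := hI v u (hx u hu)
    rw [mul_comm] at this
    rw [huv] at this
    exact hrI this
  have h1 : (a'' * b).coeff r = 0 := by
    apply key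
    intro p hp
    rw [ha''def, MonoidAlgebra.coeff_ofCoeff, Finsupp.support_filter] at hp
    exact (Finset.mem_filter.mp hp).2
  have h2 : (a' * b'').coeff r = 0 := by
    rw [mul_comm]
    apply key
    intro p hp
    rw [hb''def, MonoidAlgebra.coeff_ofCoeff, Finsupp.support_filter] at hp
    exact (Finset.mem_filter.mp hp).2
  have hdecomp : a * b = a'' * b + a' * b'' + a' * b' := by
    calc a * b = (a'' + a') * b := by rw [haa]
    _ = a'' * b + a' * (b'' + b') := by rw [hbb]; ring
    _ = a'' * b + a' * b'' + a' * b' := by ring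
  have heval : (a * b).coeff r = (a' * b').coeff r := by
    rw [hdecomp, MonoidAlgebra.coeff_add, MonoidAlgebra.coeff_add, Finsupp.add_apply, Finsupp.add_apply, h1, h2, zero_add, zero_add]
  have hrsupp : r ∈ (a * b).coeff.support := by
    rw [Finsupp.mem_support_iff, heval]
    exact Finsupp.mem_support_iff.mp hr
  exact hrI (hab r hrsupp)
end

section
/- Let k be a field and M a module over k[x]. Then the following are equivalent: (1) x is M-regular (multiplication by x on M is injective); (2) x is regular on the localization M_{(x)} over k[x]_{(x)}. If M is finitely generated, these are further equivalent to M being free after localizing at the prime (x). -/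
open Polynomial

/-- Injectivity of scalar multiplication is equivalent to triviality of the kernel. -/
private lemma inj_iff_reg {R N : Type*} [CommRing R] [AddCommGroup N] [Module R N] (a : R) :
    Function.Injective (fun m : N => a • m) ↔ ∀ m : N, a • m = 0 → m = 0 := by
  constructor
  · intro h m hm
    exact h (by simpa using hm)
  · intro h m m' e
    simp only at e
    have : a • (m - m') = 0 := by rw [smul_sub, e, sub_self]
    exact sub_eq_zero.mp (h _ this)

/-- Let `k` be a field and `M` a module over `k[x]`. Then the following are
equivalent: (1) `x` is `M`-regular (multiplication by `x` on `M` is injective); (2) `x` is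
regular on the localization `M_{(x)}` over `k[x]_{(x)}`. If `M` is finitely generated, these
are further equivalent to `M_{(x)}` being a free `k[x]_{(x)}`-module. -/
theorem stmt16 (k : Type) [Field k] (M : Type) [AddCommGroup M] [Module (Polynomial k) M]
    [hp : (Ideal.span {Polynomial.X} : Ideal (Polynomial k)).IsPrime] :
    ((Function.Injective fun m : M => (Polynomial.X : Polynomial k) • m) ↔
      Function.Injective
        (fun m : LocalizedModule
            (Ideal.span {Polynomial.X} : Ideal (Polynomial k)).primeCompl M =>
          (algebraMap (Polynomial k)
              (Localization.AtPrime (Ideal.span {Polynomial.X} : Ideal (Polynomial k)))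
              Polynomial.X) • m)) ∧
    (Module.Finite (Polynomial k) M →
      ((Function.Injective fun m : M => (Polynomial.X : Polynomial k) • m) ↔
        Module.Free
          (Localization.AtPrime (Ideal.span {Polynomial.X} : Ideal (Polynomial k)))
          (LocalizedModule
            (Ideal.span {Polynomial.X} : Ideal (Polynomial k)).primeCompl M))) := by
  set R := Polynomial k
  set p : Ideal R := Ideal.span {Polynomial.X}
  set Rp := Localization.AtPrime p
  set Mp := LocalizedModule p.primeCompl M
  set ξ : Rp := algebraMap R Rp Polynomial.X with hξdef
  -- x regular on M → ξ regular on Mp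
  have hup : (∀ m : M, (Polynomial.X : R) • m = 0 → m = 0) →
      ∀ z : Mp, ξ • z = 0 → z = 0 := by
    intro h z hz
    induction z using LocalizedModule.induction_on with
    | h m s =>
      rw [hξdef, algebraMap_smul, LocalizedModule.smul'_mk] at hz
      rw [← LocalizedModule.zero_mk (1 : p.primeCompl)] at hz
      obtain ⟨u, hu⟩ := LocalizedModule.mk_eq.mp hz
      simp only [one_smul, smul_zero, Submonoid.smul_def] at hu
      have : (Polynomial.X : R) • ((u : R) • m) = 0 := by
        rw [smul_comm, hu]
      have hum : (u : R) • m = 0 := h _ this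
      rw [← LocalizedModule.zero_mk (1 : p.primeCompl)]
      exact LocalizedModule.mk_eq.mpr ⟨u, by
        simp only [one_smul, smul_zero, Submonoid.smul_def, hum]⟩
  -- ξ regular on Mp → x regular on M
  have hdown : (∀ z : Mp, ξ • z = 0 → z = 0) →
      ∀ m : M, (Polynomial.X : R) • m = 0 → m = 0 := by
    intro h m hm
    have h1 : ξ • (LocalizedModule.mk m (1 : p.primeCompl) : Mp) = 0 := by
      rw [hξdef, algebraMap_smul, LocalizedModule.smul'_mk, hm,
        LocalizedModule.zero_mk]
    have h2 := h _ h1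
    rw [← LocalizedModule.zero_mk (1 : p.primeCompl)] at h2
    obtain ⟨u, hu⟩ := LocalizedModule.mk_eq.mp h2
    simp only [one_smul, smul_zero, Submonoid.smul_def] at hu
    -- `u` is a polynomial with nonzero constant coefficient
    have huX : ¬ (Polynomial.X : R) ∣ (u : R) := fun hdvd =>
      u.2 (Ideal.mem_span_singleton.mpr hdvd)
    have hc : (u : R).coeff 0 ≠ 0 := fun h0 => huX (Polynomial.X_dvd_iff.mpr h0)
    obtain ⟨q, hq⟩ : (Polynomial.X : R) ∣ ((u : R) - Polynomial.C ((u : R).coeff 0)) :=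
      Polynomial.X_dvd_iff.mpr (by rw [Polynomial.coeff_sub, Polynomial.coeff_C_zero, sub_self])
    have hu' : (u : R) = Polynomial.X * q + Polynomial.C ((u : R).coeff 0) := by
      rw [← hq]; ring
    have hCm : (Polynomial.C ((u : R).coeff 0)) • m = 0 := by
      have := hu
      rw [hu', add_smul, mul_comm, mul_smul, hm, smul_zero, zero_add] at this
      exact this
    have hunit : IsUnit (Polynomial.C ((u : R).coeff 0) : R) :=
      Polynomial.isUnit_C.mpr (isUnit_iff_ne_zero.mpr hc)
    obtain ⟨v, hv⟩ := hunit
    calc m = ((v⁻¹ : Rˣ) : R) • ((v : R) • m) := by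
            rw [smul_smul, Units.inv_mul, one_smul]
      _ = 0 := by rw [hv, hCm, smul_zero]
  constructor
  · exact (inj_iff_reg _).trans (Iff.trans ⟨hup, hdown⟩ (inj_iff_reg ξ).symm)
  · intro hfin
    haveI : Module.Finite Rp Mp :=
      Module.Finite.of_isLocalizedModule p.primeCompl
        (LocalizedModule.mkLinearMap p.primeCompl M)
    have hpbot : p ≠ ⊥ := by
      simp only [p, ne_eq, Ideal.span_singleton_eq_bot]
      exact Polynomial.X_ne_zero
    haveI hdvr : IsDiscreteValuationRing Rp :=
      IsLocalization.AtPrime.isDiscreteValuationRing_of_dedekind_domain R hpbot Rp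
    -- regularity of powers of ξ
    have pow_reg : (∀ z : Mp, ξ • z = 0 → z = 0) →
        ∀ (n : ℕ) (z : Mp), (ξ ^ n) • z = 0 → z = 0 := by
      intro h n
      induction n with
      | zero => intro z hz; simpa using hz
      | succ n ih =>
        intro z hz
        rw [pow_succ', mul_smul] at hz
        exact ih z (h _ hz)
    rw [inj_iff_reg]
    constructor
    · intro hM
      have hMp := hup hM
      haveI : NoZeroSMulDivisors Rp Mp := by
        constructor
        intro a z haz
        by_cases ha : a = 0
        · exact Or.inl ha
        refine Or.inr ?_
        obtain ⟨⟨r, s⟩, hrs⟩ := IsLocalization.mk'_surjective p.primeCompl a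
        simp only at hrs
        have hr : r ≠ 0 := by
          rintro rfl
          exact ha (by rw [← hrs, IsLocalization.mk'_zero])
        have key : (algebraMap R Rp r) • z = 0 := by
          calc (algebraMap R Rp r) • z
              = (IsLocalization.mk' Rp r s * algebraMap R Rp (s : R)) • z := by
                rw [IsLocalization.mk'_spec]
            _ = (algebraMap R Rp (s : R)) • (a • z) := by
                rw [hrs, mul_comm, mul_smul]
            _ = 0 := by rw [haz, smul_zero]
        obtain ⟨t, ht, hnd⟩ :=
          (FiniteMultiplicity.of_prime_left Polynomial.prime_X hr).exists_eq_pow_mul_and_not_dvd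
        have htS : t ∈ p.primeCompl := fun hmem => hnd (Ideal.mem_span_singleton.mp hmem)
        have hu : IsUnit (algebraMap R Rp t) := IsLocalization.map_units Rp ⟨t, htS⟩
        have hpow : (ξ ^ multiplicity (Polynomial.X : R) r) • ((algebraMap R Rp t) • z) = 0 := by
          rw [← mul_smul, hξdef, ← map_pow, ← map_mul, ← ht]
          exact key
        have h2 : (algebraMap R Rp t) • z = 0 := pow_reg hMp _ _ hpow
        obtain ⟨v, hv⟩ := hu
        calc z = ((v⁻¹ : Rpˣ) : Rp) • ((v : Rp) • z) := by
              rw [smul_smul, Units.inv_mul, one_smul]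
          _ = 0 := by rw [hv, h2, smul_zero]
      exact Module.free_of_finite_type_torsion_free'
    · intro hfree
      haveI := hfree
      have hξ0 : ξ ≠ 0 := by
        intro h0
        have hinj : Function.Injective (algebraMap R Rp) :=
          IsLocalization.injective Rp p.primeCompl_le_nonZeroDivisors
        exact Polynomial.X_ne_zero (hinj (by rw [← hξdef, h0, map_zero]))
      exact hdown (fun z hz => (smul_eq_zero.mp hz).resolve_left hξ0)
end

section
/- Let C₁ → C₀ and C₂ → C₀ be surjections of commutative rings with fibered product C = C₁ ×_{C₀} C₂. Then: (a) the natural map C₁ ⊗_C C₂ → C₀ is an isomorphism; (b) the prime spectra Spec C₁ and Spec C₂, viewed as closed subschemes of Spec C, cover Spec C (every prime ideal of C contains I₁ × 0 or 0 × I₂, where Iᵢ = ker(Cᵢ → C₀)); (c) if C₁ and C₂ are noetherian then C is noetherian. -/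
open scoped TensorProduct

/-- The fibered product of rings `C = C₁ ×_{C₀} C₂`, as a subring of `C₁ × C₂`. -/
def fibRing (C₁ C₂ C₀ : Type) [CommRing C₁] [CommRing C₂] [CommRing C₀]
    (f₁ : C₁ →+* C₀) (f₂ : C₂ →+* C₀) : Subring (C₁ × C₂) :=
  RingHom.eqLocus (f₁.comp (RingHom.fst C₁ C₂)) (f₂.comp (RingHom.snd C₁ C₂))

/-- The first projection `C → C₁`. -/
def fibFst (C₁ C₂ C₀ : Type) [CommRing C₁] [CommRing C₂] [CommRing C₀]
    (f₁ : C₁ →+* C₀) (f₂ : C₂ →+* C₀) : ↥(fibRing C₁ C₂ C₀ f₁ f₂) →+* C₁ :=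
  (RingHom.fst C₁ C₂).comp (fibRing C₁ C₂ C₀ f₁ f₂).subtype

/-- The second projection `C → C₂`. -/
def fibSnd (C₁ C₂ C₀ : Type) [CommRing C₁] [CommRing C₂] [CommRing C₀]
    (f₁ : C₁ →+* C₀) (f₂ : C₂ →+* C₀) : ↥(fibRing C₁ C₂ C₀ f₁ f₂) →+* C₂ :=
  (RingHom.snd C₁ C₂).comp (fibRing C₁ C₂ C₀ f₁ f₂).subtype

theorem auxNoeth {R S : Type} [CommRing R] [CommRing S] [Algebra R S]
    (hf : Function.Surjective (algebraMap R S)) (hS : IsNoetherianRing S) :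
    IsNoetherian R S := by
  rw [isNoetherian_def]
  intro N
  have hN : ∀ (s x : S), x ∈ N → s * x ∈ N := by
    intro s x hx
    obtain ⟨r, hr⟩ := hf s
    rw [← hr, ← Algebra.smul_def]
    exact N.smul_mem r hx
  let N' : Ideal S :=
    { carrier := N
      add_mem' := fun h h' => N.add_mem h h'
      zero_mem' := N.zero_mem
      smul_mem' := fun s x hx => by simpa [smul_eq_mul] using hN s x hx }
  obtain ⟨s, hs⟩ := (isNoetherian_def.mp hS) N'
  refine ⟨s, le_antisymm (Submodule.span_le.mpr ?_) ?_⟩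
  · intro x hx
    have : x ∈ Submodule.span S (↑s : Set S) := Submodule.subset_span hx
    rw [hs] at this
    exact this
  · intro x hx
    have hx' : x ∈ Submodule.span S (↑s : Set S) := by rw [hs]; exact hx
    refine Submodule.span_induction (p := fun x _ => x ∈ Submodule.span R (↑s : Set S))
      (fun y hy => Submodule.subset_span hy) (Submodule.zero_mem _)
      (fun y z _ _ hy hz => Submodule.add_mem _ hy hz) ?_ hx'
    intro c y _ hy
    obtain ⟨r, hr⟩ := hf c
    rw [smul_eq_mul, ← hr, ← Algebra.smul_def]
    exact Submodule.smul_mem _ r hy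

theorem auxTmulSurj {R A B : Type} [CommRing R] [CommRing A] [CommRing B]
    [Algebra R A] [Algebra R B] (h : Function.Surjective (algebraMap R A))
    (z : A ⊗[R] B) : ∃ y : B, z = 1 ⊗ₜ[R] y := by
  induction z using TensorProduct.induction_on with
  | zero => exact ⟨0, (TensorProduct.tmul_zero _ _).symm⟩
  | tmul x y =>
      obtain ⟨c, hc⟩ := h x
      refine ⟨c • y, ?_⟩
      rw [← TensorProduct.smul_tmul, ← hc, Algebra.algebraMap_eq_smul_one]
  | add z₁ z₂ h₁ h₂ =>
      obtain ⟨y₁, hy₁⟩ := h₁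
      obtain ⟨y₂, hy₂⟩ := h₂
      exact ⟨y₁ + y₂, by rw [hy₁, hy₂, TensorProduct.tmul_add]⟩

theorem auxTmulZero {R A B : Type} [CommRing R] [CommRing A] [CommRing B]
    [Algebra R A] [Algebra R B] (c : R) (hA : algebraMap R A c = 0) :
    (1 : A) ⊗ₜ[R] (algebraMap R B c) = 0 := by
  rw [Algebra.algebraMap_eq_smul_one, ← TensorProduct.smul_tmul,
    ← Algebra.algebraMap_eq_smul_one, hA, TensorProduct.zero_tmul]


set_option maxHeartbeats 1000000 in
set_option synthInstance.maxHeartbeats 1000000 in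
/-- Let `C₁ → C₀` and `C₂ → C₀` be surjections of commutative rings with
fibered product `C = C₁ ×_{C₀} C₂`. Then: (a) the natural map `C₁ ⊗_C C₂ → C₀` is an
isomorphism; (b) `Spec C₁` and `Spec C₂` cover `Spec C`: every prime ideal of `C` contains
`I₁ × 0 = ker (C → C₂)` or `0 × I₂ = ker (C → C₁)`; (c) if `C₁` and `C₂` are noetherian then
`C` is noetherian. -/
theorem stmt17 (C₁ C₂ C₀ : Type) [CommRing C₁] [CommRing C₂] [CommRing C₀]
    (f₁ : C₁ →+* C₀) (f₂ : C₂ →+* C₀)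
    (h₁ : Function.Surjective f₁) (h₂ : Function.Surjective f₂) :
    letI : Algebra ↥(fibRing C₁ C₂ C₀ f₁ f₂) C₁ := (fibFst C₁ C₂ C₀ f₁ f₂).toAlgebra
    letI : Algebra ↥(fibRing C₁ C₂ C₀ f₁ f₂) C₂ := (fibSnd C₁ C₂ C₀ f₁ f₂).toAlgebra
    letI : Algebra ↥(fibRing C₁ C₂ C₀ f₁ f₂) C₀ :=
      (f₁.comp (fibFst C₁ C₂ C₀ f₁ f₂)).toAlgebra
    (Function.Bijective
      (Algebra.TensorProduct.productMap
        (⟨f₁, fun _ => rfl⟩ : C₁ →ₐ[↥(fibRing C₁ C₂ C₀ f₁ f₂)] C₀)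
        (⟨f₂, fun c => Eq.symm c.2⟩ : C₂ →ₐ[↥(fibRing C₁ C₂ C₀ f₁ f₂)] C₀))) ∧
    (∀ P : Ideal ↥(fibRing C₁ C₂ C₀ f₁ f₂), P.IsPrime →
      RingHom.ker (fibSnd C₁ C₂ C₀ f₁ f₂) ≤ P ∨ RingHom.ker (fibFst C₁ C₂ C₀ f₁ f₂) ≤ P) ∧
    (IsNoetherianRing C₁ → IsNoetherianRing C₂ →
      IsNoetherianRing ↥(fibRing C₁ C₂ C₀ f₁ f₂)) := by
  letI : Algebra ↥(fibRing C₁ C₂ C₀ f₁ f₂) C₁ := (fibFst C₁ C₂ C₀ f₁ f₂).toAlgebra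
  letI : Algebra ↥(fibRing C₁ C₂ C₀ f₁ f₂) C₂ := (fibSnd C₁ C₂ C₀ f₁ f₂).toAlgebra
  letI : Algebra ↥(fibRing C₁ C₂ C₀ f₁ f₂) C₀ :=
    (f₁.comp (fibFst C₁ C₂ C₀ f₁ f₂)).toAlgebra
  have hp₁ : Function.Surjective (fibFst C₁ C₂ C₀ f₁ f₂) := by
    intro x
    obtain ⟨y, hy⟩ := h₂ (f₁ x)
    exact ⟨⟨(x, y), hy.symm⟩, rfl⟩
  have hp₂ : Function.Surjective (fibSnd C₁ C₂ C₀ f₁ f₂) := by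
    intro y
    obtain ⟨x, hx⟩ := h₁ (f₂ y)
    exact ⟨⟨(x, y), hx⟩, rfl⟩
  have halg₁ : Function.Surjective (algebraMap ↥(fibRing C₁ C₂ C₀ f₁ f₂) C₁) := by
    rwa [RingHom.algebraMap_toAlgebra]
  have halg₂ : Function.Surjective (algebraMap ↥(fibRing C₁ C₂ C₀ f₁ f₂) C₂) := by
    rwa [RingHom.algebraMap_toAlgebra]
  refine ⟨⟨?_, ?_⟩, ?_, ?_⟩
  · -- injectivity
    rw [injective_iff_map_eq_zero]
    intro z hz
    obtain ⟨y, rfl⟩ := auxTmulSurj halg₁ z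
    have hy : f₂ y = 0 := by
      simpa [Algebra.TensorProduct.productMap_apply_tmul] using hz
    set c : ↥(fibRing C₁ C₂ C₀ f₁ f₂) :=
      ⟨(0, y), show f₁ 0 = f₂ y by rw [map_zero, hy]⟩
    have h0 : algebraMap _ C₁ c = 0 := by
      rw [RingHom.algebraMap_toAlgebra]; rfl
    have hy' : algebraMap _ C₂ c = y := by
      rw [RingHom.algebraMap_toAlgebra]; rfl
    rw [← hy', auxTmulZero c h0]
  · -- surjectivity
    intro c₀
    obtain ⟨x, hx⟩ := h₁ c₀
    exact ⟨x ⊗ₜ 1, by simp [Algebra.TensorProduct.productMap_apply_tmul, hx]⟩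
  · -- part (b)
    intro P hP
    have hmul : RingHom.ker (fibSnd C₁ C₂ C₀ f₁ f₂) * RingHom.ker (fibFst C₁ C₂ C₀ f₁ f₂)
        ≤ P := by
      refine Ideal.mul_le.mpr fun x hx y hy => ?_
      have hxy : x * y = 0 := by
        have hx' : (x : C₁ × C₂).2 = 0 := hx
        have hy' : (y : C₁ × C₂).1 = 0 := hy
        apply Subtype.ext
        apply Prod.ext
        · show (x : C₁ × C₂).1 * (y : C₁ × C₂).1 = 0
          rw [hy', mul_zero]
        · show (x : C₁ × C₂).2 * (y : C₁ × C₂).2 = 0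
          rw [hx', zero_mul]
      rw [hxy]
      exact P.zero_mem
    exact (Ideal.IsPrime.mul_le hP).mp hmul
  · -- part (c)
    intro hn₁ hn₂
    haveI n1 : IsNoetherian ↥(fibRing C₁ C₂ C₀ f₁ f₂) C₁ := auxNoeth halg₁ hn₁
    haveI n2 : IsNoetherian ↥(fibRing C₁ C₂ C₀ f₁ f₂) C₂ := auxNoeth halg₂ hn₂
    set K : Ideal ↥(fibRing C₁ C₂ C₀ f₁ f₂) := RingHom.ker (fibFst C₁ C₂ C₀ f₁ f₂) with hK
    haveI nK : IsNoetherian ↥(fibRing C₁ C₂ C₀ f₁ f₂) ↥K := by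
      refine isNoetherian_of_injective
        ((Algebra.linearMap ↥(fibRing C₁ C₂ C₀ f₁ f₂) C₂).comp K.subtype) ?_
      intro a b hab
      have hab' : fibSnd C₁ C₂ C₀ f₁ f₂ a.1 = fibSnd C₁ C₂ C₀ f₁ f₂ b.1 := by
        simpa [Algebra.linearMap, RingHom.algebraMap_toAlgebra] using hab
      have ha : fibFst C₁ C₂ C₀ f₁ f₂ a.1 = 0 := a.2
      have hb : fibFst C₁ C₂ C₀ f₁ f₂ b.1 = 0 := b.2
      apply Subtype.ext; apply Subtype.ext; apply Prod.ext
      · show ((a.1 : C₁ × C₂)).1 = ((b.1 : C₁ × C₂)).1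
        exact ha.trans hb.symm
      · exact hab'
    rw [isNoetherianRing_iff]
    refine isNoetherian_of_range_eq_ker K.subtype
      (Algebra.linearMap ↥(fibRing C₁ C₂ C₀ f₁ f₂) C₁) ?_
    rw [Submodule.range_subtype]
    ext x
    show x ∈ K ↔ algebraMap _ C₁ x = 0
    rw [RingHom.algebraMap_toAlgebra]
    exact Iff.rfl
end

section
/- Let C₁ → C₀ and C₂ → C₀ be surjections of A-algebras with fibered product C = C₁ ×_{C₀} C₂. If C₁ and C₂ are of finite type over A and at least one of the kernels ker(Cᵢ → C₀) is a finitely generated ideal, then C is of finite type over A. -/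
theorem aux18 {A C₁ C₂ C₀ : Type} [CommRing A] [CommRing C₁] [CommRing C₂] [CommRing C₀]
    [Algebra A C₁] [Algebra A C₂] [Algebra A C₀]
    (f₁ : C₁ →ₐ[A] C₀) (f₂ : C₂ →ₐ[A] C₀)
    (h₁ : Function.Surjective f₁) (h₂ : Function.Surjective f₂)
    (hft₁ : Algebra.FiniteType A C₁) (hft₂ : Algebra.FiniteType A C₂)
    (hker : (RingHom.ker f₂.toRingHom).FG) :
    (AlgHom.equalizer (f₁.comp (AlgHom.fst A C₁ C₂)) (f₂.comp (AlgHom.snd A C₁ C₂))).FG := by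
  classical
  obtain ⟨S₁, hS₁⟩ := hft₁.out
  obtain ⟨S₂, hS₂⟩ := hft₂.out
  obtain ⟨T, hT⟩ := hker
  choose y hy using fun x : C₁ => h₂ (f₁ x)
  choose w hw using fun z : C₂ => h₁ (f₂ z)
  set E := AlgHom.equalizer (f₁.comp (AlgHom.fst A C₁ C₂)) (f₂.comp (AlgHom.snd A C₁ C₂)) with hE
  set G : Finset (C₁ × C₂) :=
    S₁.image (fun x => (x, y x)) ∪ S₂.image (fun z => (w z, z)) ∪
      T.image (fun t => ((0 : C₁), t)) with hG
  have hmemE : ∀ p : C₁ × C₂, p ∈ E ↔ f₁ p.1 = f₂ p.2 := fun p => Iff.rfl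
  have hGE : (G : Set (C₁ × C₂)) ⊆ E := by
    intro p hp
    simp only [hG, Finset.coe_union, Finset.coe_image, Set.mem_union, Set.mem_image] at hp
    rcases hp with (⟨x, _, rfl⟩ | ⟨z, _, rfl⟩) | ⟨t, ht, rfl⟩
    · exact (hmemE _).2 (hy x).symm
    · exact (hmemE _).2 (hw z)
    · refine (hmemE _).2 ?_
      have : t ∈ RingHom.ker f₂.toRingHom := by
        rw [← hT]; exact Ideal.subset_span ht
      simpa using this.symm
  have hfst : ∀ c : C₁, ∃ p ∈ Algebra.adjoin A (G : Set (C₁ × C₂)), p.1 = c := by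
    intro c
    have hmap : (Algebra.adjoin A (G : Set (C₁ × C₂))).map (AlgHom.fst A C₁ C₂)
        = Algebra.adjoin A ((AlgHom.fst A C₁ C₂) '' G) := AlgHom.map_adjoin _ _
    have hsub : (S₁ : Set C₁) ⊆ (AlgHom.fst A C₁ C₂) '' G := by
      intro x hx
      refine ⟨(x, y x), ?_, rfl⟩
      simp only [hG, Finset.coe_union, Finset.coe_image, Set.mem_union, Set.mem_image]
      exact Or.inl (Or.inl ⟨x, hx, rfl⟩)
    have : c ∈ (Algebra.adjoin A (G : Set (C₁ × C₂))).map (AlgHom.fst A C₁ C₂) := by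
      rw [hmap]
      have := Algebra.adjoin_mono (R := A) hsub
      rw [hS₁] at this
      exact this trivial
    obtain ⟨p, hp, hpc⟩ := this
    exact ⟨p, hp, hpc⟩
  have hsnd : ∀ c : C₂, ∃ p ∈ Algebra.adjoin A (G : Set (C₁ × C₂)), p.2 = c := by
    intro c
    have hmap : (Algebra.adjoin A (G : Set (C₁ × C₂))).map (AlgHom.snd A C₁ C₂)
        = Algebra.adjoin A ((AlgHom.snd A C₁ C₂) '' G) := AlgHom.map_adjoin _ _
    have hsub : (S₂ : Set C₂) ⊆ (AlgHom.snd A C₁ C₂) '' G := by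
      intro z hz
      refine ⟨(w z, z), ?_, rfl⟩
      simp only [hG, Finset.coe_union, Finset.coe_image, Set.mem_union, Set.mem_image]
      exact Or.inl (Or.inr ⟨z, hz, rfl⟩)
    have : c ∈ (Algebra.adjoin A (G : Set (C₁ × C₂))).map (AlgHom.snd A C₁ C₂) := by
      rw [hmap]
      have := Algebra.adjoin_mono (R := A) hsub
      rw [hS₂] at this
      exact this trivial
    obtain ⟨p, hp, hpc⟩ := this
    exact ⟨p, hp, hpc⟩
  have hker0 : ∀ d ∈ RingHom.ker f₂.toRingHom, ((0 : C₁), d) ∈ Algebra.adjoin A (G : Set (C₁ × C₂)) := by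
    intro d hd
    rw [← hT] at hd
    refine Submodule.span_induction ?_ ?_ ?_ ?_ hd
    · intro t ht
      apply Algebra.subset_adjoin
      simp only [hG, Finset.coe_union, Finset.coe_image, Set.mem_union, Set.mem_image]
      exact Or.inr ⟨t, ht, rfl⟩
    · exact Subalgebra.zero_mem (Algebra.adjoin A (G : Set (C₁ × C₂)))
    · intro a b _ _ ha hb
      have := Subalgebra.add_mem _ ha hb
      simpa using this
    · intro c a _ ha
      obtain ⟨q, hq, hq2⟩ := hsnd c
      have := Subalgebra.mul_mem _ hq ha
      have heq : q * ((0 : C₁), a) = ((0 : C₁), c • a) := by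
        simp [Prod.ext_iff, hq2, smul_eq_mul]
      rwa [heq] at this
  refine ⟨G, le_antisymm (Algebra.adjoin_le hGE) ?_⟩
  rintro ⟨c₁, c₂⟩ hc
  have hceq : f₁ c₁ = f₂ c₂ := (hmemE _).1 hc
  obtain ⟨p, hp, hp1⟩ := hfst c₁
  have hpE : p ∈ E := Algebra.adjoin_le hGE hp
  have hdker : c₂ - p.2 ∈ RingHom.ker f₂.toRingHom := by
    have h2 : f₁ p.1 = f₂ p.2 := (hmemE _).1 hpE
    simp only [RingHom.mem_ker, AlgHom.toRingHom_eq_coe, RingHom.coe_coe, map_sub]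
    rw [← h2, hp1, hceq]
    ring
  have h0d := hker0 _ hdker
  have : p + ((0 : C₁), c₂ - p.2) = (c₁, c₂) := by
    ext <;> simp [hp1]
  rw [← this]
  exact Subalgebra.add_mem _ hp h0d

/-- Let `C₁ → C₀` and `C₂ → C₀` be surjections of `A`-algebras with fibered
product `C = C₁ ×_{C₀} C₂` (the equalizer of the two induced maps `C₁ × C₂ → C₀`). If `C₁` and
`C₂` are of finite type over `A` and at least one of the kernels `ker (Cᵢ → C₀)` is a finitely
generated ideal, then `C` is of finite type over `A`. -/
theorem stmt18 (A C₁ C₂ C₀ : Type) [CommRing A] [CommRing C₁] [CommRing C₂] [CommRing C₀]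
    [Algebra A C₁] [Algebra A C₂] [Algebra A C₀]
    (f₁ : C₁ →ₐ[A] C₀) (f₂ : C₂ →ₐ[A] C₀)
    (h₁ : Function.Surjective f₁) (h₂ : Function.Surjective f₂)
    (hft₁ : Algebra.FiniteType A C₁) (hft₂ : Algebra.FiniteType A C₂)
    (hker : (RingHom.ker f₁.toRingHom).FG ∨ (RingHom.ker f₂.toRingHom).FG) :
    Algebra.FiniteType A
      ↥(AlgHom.equalizer (f₁.comp (AlgHom.fst A C₁ C₂)) (f₂.comp (AlgHom.snd A C₁ C₂))) := by
  rw [← Subalgebra.fg_iff_finiteType]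
  rcases hker with hk | hk
  · -- swap: use aux with roles of f₁ f₂ exchanged
    have hfg := aux18 f₂ f₁ h₂ h₁ hft₂ hft₁ hk
    -- transfer along the swap isomorphism
    let σ : (C₂ × C₁) ≃ₐ[A] (C₁ × C₂) :=
      AlgEquiv.ofRingEquiv (f := RingEquiv.prodComm) (fun x => rfl)
    have heq : (AlgHom.equalizer (f₁.comp (AlgHom.fst A C₁ C₂)) (f₂.comp (AlgHom.snd A C₁ C₂)))
        = (AlgHom.equalizer (f₂.comp (AlgHom.fst A C₂ C₁)) (f₁.comp (AlgHom.snd A C₂ C₁))).map σ.toAlgHom := by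
      ext ⟨c₁, c₂⟩
      simp only [Subalgebra.mem_map]
      constructor
      · intro h
        exact ⟨(c₂, c₁), h.symm, rfl⟩
      · rintro ⟨⟨a, b⟩, hab, hab2⟩
        have : (a, b).swap = (c₁, c₂) := hab2
        have hb : b = c₁ := congrArg Prod.fst this
        have ha : a = c₂ := congrArg Prod.snd this
        subst hb ha
        exact hab.symm
    rw [heq]
    exact Subalgebra.FG.map _ hfg
  · exact aux18 f₁ f₂ h₁ h₂ hft₁ hft₂ hk
end

section
/- Let C₁ → C₀ ← C₂ be ring surjections with fibered product C = C₁ ×_{C₀} C₂, with ideals I₁ = ker(C → C₂) and I₂ = ker(C → C₁). Suppose M₁ is a C₁-module and M₂ is a C₂-module with a given C₀-module isomorphism φ : M₁/I₁'M₁ ≅ M₂/I₂'M₂ (where Iᵢ' = ker(Cᵢ → C₀)), and let D(M₁,M₂) = M₁ ×_{M₀} M₂ be the fibered product C-module. Then the natural maps induce a C₁-module isomorphism D(M₁,M₂)/(0×I₂)·D(M₁,M₂) ≅ M₁, and similarly D(M₁,M₂)/(I₁×0)·D(M₁,M₂) ≅ M₂. -/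
section

variable (C₁ C₂ C₀ : Type) [CommRing C₁] [CommRing C₂] [CommRing C₀]
  (f₁ : C₁ →+* C₀) (f₂ : C₂ →+* C₀)
  (M₁ M₂ : Type) [AddCommGroup M₁] [AddCommGroup M₂] [Module C₁ M₁] [Module C₂ M₂]

/-- The quotient `M₁ / I₁'M₁`, where `I₁' = ker (C₁ → C₀)`. -/
abbrev quotMod₁ : Type := M₁ ⧸ ((RingHom.ker f₁) • (⊤ : Submodule C₁ M₁))

/-- The quotient `M₂ / I₂'M₂`, where `I₂' = ker (C₂ → C₀)`. -/
abbrev quotMod₂ : Type := M₂ ⧸ ((RingHom.ker f₂) • (⊤ : Submodule C₂ M₂))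

/-- `M₁` as a module over the fibered product `C`. -/
def modC₁ : Module ↥(fibRing C₁ C₂ C₀ f₁ f₂) M₁ :=
  Module.compHom M₁ (fibFst C₁ C₂ C₀ f₁ f₂)

/-- `M₂` as a module over the fibered product `C`. -/
def modC₂ : Module ↥(fibRing C₁ C₂ C₀ f₁ f₂) M₂ :=
  Module.compHom M₂ (fibSnd C₁ C₂ C₀ f₁ f₂)

/-- `M₁ × M₂` as a module over the fibered product `C`. -/
def modProd : Module ↥(fibRing C₁ C₂ C₀ f₁ f₂) (M₁ × M₂) := by
  letI := modC₁ C₁ C₂ C₀ f₁ f₂ M₁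
  letI := modC₂ C₁ C₂ C₀ f₁ f₂ M₂
  infer_instance

/-- The fibered product module `D(M₁, M₂) = M₁ ×_{M₀} M₂`, a `C`-submodule of `M₁ × M₂`,
where the two maps to `M₀` are the natural projection `M₂ → M₂/I₂'M₂` and the natural
projection `M₁ → M₁/I₁'M₁` followed by the clutching isomorphism `φ`. -/
def fibD (φ : quotMod₁ C₁ C₀ f₁ M₁ ≃+ quotMod₂ C₂ C₀ f₂ M₂)
    (hφ : ∀ (c₁ : C₁) (c₂ : C₂), f₁ c₁ = f₂ c₂ →
      ∀ n : quotMod₁ C₁ C₀ f₁ M₁, φ (c₁ • n) = c₂ • φ n) :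
    @Submodule ↥(fibRing C₁ C₂ C₀ f₁ f₂) (M₁ × M₂) _ _ (modProd C₁ C₂ C₀ f₁ f₂ M₁ M₂) := by
  letI := modC₁ C₁ C₂ C₀ f₁ f₂ M₁
  letI := modC₂ C₁ C₂ C₀ f₁ f₂ M₂
  letI := modProd C₁ C₂ C₀ f₁ f₂ M₁ M₂
  refine
    { carrier := {mm : M₁ × M₂ |
        φ (((RingHom.ker f₁) • (⊤ : Submodule C₁ M₁)).mkQ mm.1) =
          ((RingHom.ker f₂) • (⊤ : Submodule C₂ M₂)).mkQ mm.2}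
      add_mem' := ?_
      zero_mem' := ?_
      smul_mem' := ?_ }
  · intro a b ha hb
    simp only [Set.mem_setOf_eq, Prod.fst_add, Prod.snd_add, map_add] at *
    rw [ha, hb]
  · simp only [Set.mem_setOf_eq, Prod.fst_zero, Prod.snd_zero, map_zero]
  · intro c mm hmm
    simp only [Set.mem_setOf_eq] at hmm ⊢
    show φ (((RingHom.ker f₁) • (⊤ : Submodule C₁ M₁)).mkQ
        ((fibFst C₁ C₂ C₀ f₁ f₂ c) • mm.1)) =
      ((RingHom.ker f₂) • (⊤ : Submodule C₂ M₂)).mkQ ((fibSnd C₁ C₂ C₀ f₁ f₂ c) • mm.2)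
    rw [LinearMap.map_smul, LinearMap.map_smul,
      hφ ((fibFst C₁ C₂ C₀ f₁ f₂) c) ((fibSnd C₁ C₂ C₀ f₁ f₂) c) c.2
        (((RingHom.ker f₁) • (⊤ : Submodule C₁ M₁)).mkQ mm.1), hmm]

end

/-- Let `C₁ → C₀ ← C₂` be ring surjections with fibered product
`C = C₁ ×_{C₀} C₂`.  Let `M₁` be a `C₁`-module and `M₂` a `C₂`-module with a clutching
isomorphism `φ : M₁/I₁'M₁ ≅ M₂/I₂'M₂` of `C₀`-modules (`C₀`-linearity is expressed by
compatibility with all pairs of scalars matching in `C₀`), and let `D(M₁, M₂) = M₁ ×_{M₀} M₂`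
be the fibered product `C`-module.  Then the natural projections induce isomorphisms
`D(M₁,M₂)/(0×I₂)·D(M₁,M₂) ≅ M₁` and `D(M₁,M₂)/(I₁×0)·D(M₁,M₂) ≅ M₂`; concretely, each
projection is surjective from `D` onto `Mᵢ`, with kernel exactly `ker(C → Cᵢ) • D`. -/
theorem stmt19 (C₁ C₂ C₀ : Type) [CommRing C₁] [CommRing C₂] [CommRing C₀]
    (f₁ : C₁ →+* C₀) (f₂ : C₂ →+* C₀)
    (h₁ : Function.Surjective f₁) (h₂ : Function.Surjective f₂)
    (M₁ M₂ : Type) [AddCommGroup M₁] [AddCommGroup M₂] [Module C₁ M₁] [Module C₂ M₂]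
    (φ : quotMod₁ C₁ C₀ f₁ M₁ ≃+ quotMod₂ C₂ C₀ f₂ M₂)
    (hφ : ∀ (c₁ : C₁) (c₂ : C₂), f₁ c₁ = f₂ c₂ →
      ∀ n : quotMod₁ C₁ C₀ f₁ M₁, φ (c₁ • n) = c₂ • φ n) :
    letI := modC₁ C₁ C₂ C₀ f₁ f₂ M₁
    letI := modC₂ C₁ C₂ C₀ f₁ f₂ M₂
    letI : Module ↥(fibRing C₁ C₂ C₀ f₁ f₂) (M₁ × M₂) := modProd C₁ C₂ C₀ f₁ f₂ M₁ M₂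
    (Submodule.map (LinearMap.fst ↥(fibRing C₁ C₂ C₀ f₁ f₂) M₁ M₂)
        (fibD C₁ C₂ C₀ f₁ f₂ M₁ M₂ φ hφ) = ⊤) ∧
    ((fibD C₁ C₂ C₀ f₁ f₂ M₁ M₂ φ hφ) ⊓
        LinearMap.ker (LinearMap.fst ↥(fibRing C₁ C₂ C₀ f₁ f₂) M₁ M₂) =
      RingHom.ker (fibFst C₁ C₂ C₀ f₁ f₂) • (fibD C₁ C₂ C₀ f₁ f₂ M₁ M₂ φ hφ)) ∧
    (Submodule.map (LinearMap.snd ↥(fibRing C₁ C₂ C₀ f₁ f₂) M₁ M₂)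
        (fibD C₁ C₂ C₀ f₁ f₂ M₁ M₂ φ hφ) = ⊤) ∧
    ((fibD C₁ C₂ C₀ f₁ f₂ M₁ M₂ φ hφ) ⊓
        LinearMap.ker (LinearMap.snd ↥(fibRing C₁ C₂ C₀ f₁ f₂) M₁ M₂) =
      RingHom.ker (fibSnd C₁ C₂ C₀ f₁ f₂) • (fibD C₁ C₂ C₀ f₁ f₂ M₁ M₂ φ hφ)) := by
  letI := modC₁ C₁ C₂ C₀ f₁ f₂ M₁
  letI := modC₂ C₁ C₂ C₀ f₁ f₂ M₂
  letI : Module ↥(fibRing C₁ C₂ C₀ f₁ f₂) (M₁ × M₂) := modProd C₁ C₂ C₀ f₁ f₂ M₁ M₂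
  set N₁ := (RingHom.ker f₁) • (⊤ : Submodule C₁ M₁) with hN₁
  set N₂ := (RingHom.ker f₂) • (⊤ : Submodule C₂ M₂) with hN₂
  set D := fibD C₁ C₂ C₀ f₁ f₂ M₁ M₂ φ hφ with hD
  have hmem : ∀ x : M₁ × M₂, x ∈ D ↔ φ (N₁.mkQ x.1) = N₂.mkQ x.2 := fun _ => Iff.rfl
  -- lifting lemmas
  have lift₁ : ∀ m₁ : M₁, ∃ m₂ : M₂, φ (N₁.mkQ m₁) = N₂.mkQ m₂ := by
    intro m₁
    obtain ⟨m₂, hm₂⟩ := N₂.mkQ_surjective (φ (N₁.mkQ m₁))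
    exact ⟨m₂, hm₂.symm⟩
  have lift₂ : ∀ m₂ : M₂, ∃ m₁ : M₁, φ (N₁.mkQ m₁) = N₂.mkQ m₂ := by
    intro m₂
    obtain ⟨m₁, hm₁⟩ := N₁.mkQ_surjective (φ.symm (N₂.mkQ m₂))
    exact ⟨m₁, by rw [hm₁, φ.apply_symm_apply]⟩
  have smul_fst : ∀ (c : ↥(fibRing C₁ C₂ C₀ f₁ f₂)) (x : M₁ × M₂),
      (c • x).1 = fibFst C₁ C₂ C₀ f₁ f₂ c • x.1 := fun _ _ => rfl
  have smul_snd : ∀ (c : ↥(fibRing C₁ C₂ C₀ f₁ f₂)) (x : M₁ × M₂),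
      (c • x).2 = fibSnd C₁ C₂ C₀ f₁ f₂ c • x.2 := fun _ _ => rfl
  refine ⟨?_, ?_, ?_, ?_⟩
  · rw [Submodule.eq_top_iff']
    intro m₁
    obtain ⟨m₂, hm₂⟩ := lift₁ m₁
    exact ⟨(m₁, m₂), (hmem _).2 hm₂, rfl⟩
  · apply le_antisymm
    · rintro ⟨x₁, x₂⟩ ⟨hxD, hxk⟩
      have hx1 : x₁ = 0 := hxk
      subst hx1
      have hx2 : x₂ ∈ N₂ := by
        have := (hmem _).1 hxD
        simp only [map_zero] at this
        exact (Submodule.Quotient.mk_eq_zero _).1 this.symm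
      clear hxD hxk
      refine Submodule.smul_induction_on hx2 ?_ ?_
      · intro c hc n _
        obtain ⟨m₁, hm₁⟩ := lift₂ n
        have hcC : ((0 : C₁), c) ∈ fibRing C₁ C₂ C₀ f₁ f₂ := by
          show f₁ 0 = f₂ c
          rw [map_zero, RingHom.mem_ker.1 hc]
        have hkc : (⟨((0 : C₁), c), hcC⟩ : ↥(fibRing C₁ C₂ C₀ f₁ f₂)) ∈
            RingHom.ker (fibFst C₁ C₂ C₀ f₁ f₂) := by
          rw [RingHom.mem_ker]; rfl
        have hd : (m₁, n) ∈ D := (hmem _).2 hm₁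
        have h := @Submodule.smul_mem_smul ↥(fibRing C₁ C₂ C₀ f₁ f₂) _ ↥(fibRing C₁ C₂ C₀ f₁ f₂) _ _ (M₁ × M₂) _ (modProd C₁ C₂ C₀ f₁ f₂ M₁ M₂) _
            ⟨fun a b x => mul_smul a b x⟩ _ _ _ _ hkc hd
        have heq : (⟨((0 : C₁), c), hcC⟩ : ↥(fibRing C₁ C₂ C₀ f₁ f₂)) • (m₁, n)
            = ((0 : M₁), c • n) := by
          refine Prod.ext ?_ ?_
          · show (0 : C₁) • m₁ = 0
            rw [zero_smul]
          · rfl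
        rw [← heq]; exact h
      · intro a b ha hb
        have h := add_mem ha hb
        have : ((0 : M₁), a) + ((0 : M₁), b) = ((0 : M₁), a + b) := by
          simp
        rwa [this] at h
    · rw [@Submodule.smul_le ↥(fibRing C₁ C₂ C₀ f₁ f₂) _ ↥(fibRing C₁ C₂ C₀ f₁ f₂) _ _ (M₁ × M₂) _ (modProd C₁ C₂ C₀ f₁ f₂ M₁ M₂) _
        ⟨fun a b x => mul_smul a b x⟩]
      intro c hc x hx
      refine ⟨D.smul_mem c hx, ?_⟩
      show (c • x).1 = 0
      rw [smul_fst, RingHom.mem_ker.1 hc, zero_smul]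
  · rw [Submodule.eq_top_iff']
    intro m₂
    obtain ⟨m₁, hm₁⟩ := lift₂ m₂
    exact ⟨(m₁, m₂), (hmem _).2 hm₁, rfl⟩
  · apply le_antisymm
    · rintro ⟨x₁, x₂⟩ ⟨hxD, hxk⟩
      have hx2 : x₂ = 0 := hxk
      subst hx2
      have hx1 : x₁ ∈ N₁ := by
        have h := (hmem _).1 hxD
        simp only [map_zero] at h
        have h0 : N₁.mkQ x₁ = 0 := by
          apply φ.injective
          rw [h, map_zero]
        exact (Submodule.Quotient.mk_eq_zero _).1 h0
      clear hxD hxk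
      refine Submodule.smul_induction_on hx1 ?_ ?_
      · intro c hc n _
        obtain ⟨m₂, hm₂⟩ := lift₁ n
        have hcC : (c, (0 : C₂)) ∈ fibRing C₁ C₂ C₀ f₁ f₂ := by
          show f₁ c = f₂ 0
          rw [map_zero, RingHom.mem_ker.1 hc]
        have hkc : (⟨(c, (0 : C₂)), hcC⟩ : ↥(fibRing C₁ C₂ C₀ f₁ f₂)) ∈
            RingHom.ker (fibSnd C₁ C₂ C₀ f₁ f₂) := by
          rw [RingHom.mem_ker]; rfl
        have hd : (n, m₂) ∈ D := (hmem _).2 hm₂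
        have h := @Submodule.smul_mem_smul ↥(fibRing C₁ C₂ C₀ f₁ f₂) _ ↥(fibRing C₁ C₂ C₀ f₁ f₂) _ _ (M₁ × M₂) _ (modProd C₁ C₂ C₀ f₁ f₂ M₁ M₂) _
            ⟨fun a b x => mul_smul a b x⟩ _ _ _ _ hkc hd
        have heq : (⟨(c, (0 : C₂)), hcC⟩ : ↥(fibRing C₁ C₂ C₀ f₁ f₂)) • (n, m₂)
            = (c • n, (0 : M₂)) := by
          refine Prod.ext ?_ ?_
          · rfl
          · show (0 : C₂) • m₂ = 0
            rw [zero_smul]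
        rw [← heq]; exact h
      · intro a b ha hb
        have h := add_mem ha hb
        have : (a, (0 : M₂)) + (b, (0 : M₂)) = (a + b, (0 : M₂)) := by
          simp
        rwa [this] at h
    · rw [@Submodule.smul_le ↥(fibRing C₁ C₂ C₀ f₁ f₂) _ ↥(fibRing C₁ C₂ C₀ f₁ f₂) _ _ (M₁ × M₂) _ (modProd C₁ C₂ C₀ f₁ f₂ M₁ M₂) _
        ⟨fun a b x => mul_smul a b x⟩]
      intro c hc x hx
      refine ⟨D.smul_mem c hx, ?_⟩
      show (c • x).2 = 0
      rw [smul_snd, RingHom.mem_ker.1 hc, zero_smul]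
end
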